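/- arXiv:math/0505187 — 3 statements merged into one kernel-verified Lean document; each statement's English description precedes it below -/
import Mathlib

section
/- Every natural number n can be written as 4x² + 2·t_y + t_z for some integers x, y, z, where t_k = k(k+1)/2. -/
def tri (k : ℤ) : ℤ := k * (k + 1) / 2

namespace ThreeSq


/-- Binary quadratic form `a y² + 2 b y z + c z²`. -/
def Q2 (a b c y z : ℤ) : ℤ := a*y^2 + 2*b*y*z + c*z^2

def PD2 (a b c : ℤ) : Prop := ∀ y z : ℤ, ¬(y = 0 ∧ z = 0) → 0 < Q2 a b c y z

def Rep2 (a b c n : ℤ) : Prop := ∃ y z : ℤ, ¬(y = 0 ∧ z = 0) ∧ Q2 a b c y z = n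

lemma Q2_swap (a b c y z : ℤ) : Q2 c b a y z = Q2 a b c z y := by unfold Q2; ring

lemma PD2_swap {a b c : ℤ} (h : PD2 a b c) : PD2 c b a := by
  intro y z hyz
  rw [Q2_swap]
  exact h z y (by tauto)

lemma Rep2_swap {a b c n : ℤ} : Rep2 c b a n ↔ Rep2 a b c n := by
  constructor
  · rintro ⟨y, z, hyz, hv⟩; exact ⟨z, y, by tauto, by rw [← Q2_swap]; exact hv⟩
  · rintro ⟨y, z, hyz, hv⟩; exact ⟨z, y, by tauto, by rw [Q2_swap]; exact hv⟩

lemma Q2_shear (a b c k y z : ℤ) :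
    Q2 a (b + a*k) (a*k^2 + 2*b*k + c) y z = Q2 a b c (y + k*z) z := by unfold Q2; ring

lemma PD2_shear {a b c : ℤ} (k : ℤ) (h : PD2 a b c) :
    PD2 a (b + a*k) (a*k^2 + 2*b*k + c) := by
  intro y z hyz
  rw [Q2_shear]
  exact h _ _ (by rintro ⟨h1, h2⟩; subst h2; simp at h1; tauto)

lemma Rep2_shear {a b c n : ℤ} (k : ℤ) :
    Rep2 a (b + a*k) (a*k^2 + 2*b*k + c) n ↔ Rep2 a b c n := by
  constructor
  · rintro ⟨y, z, hyz, hv⟩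
    refine ⟨y + k*z, z, ?_, by rw [← Q2_shear]; exact hv⟩
    rintro ⟨h1, h2⟩; subst h2; simp at h1; tauto
  · rintro ⟨y, z, hyz, hv⟩
    refine ⟨y - k*z, z, ?_, ?_⟩
    · rintro ⟨h1, h2⟩; subst h2; simp at h1; tauto
    · rw [Q2_shear]; convert hv using 2; ring

lemma bin_reduce_aux : ∀ N : ℕ, ∀ a b c : ℤ, PD2 a b c → a ≤ c → a.toNat + c.toNat ≤ N →
    ∃ a' b' c', PD2 a' b' c' ∧ 2*|b'| ≤ a' ∧ a' ≤ c' ∧ a'*c' - b'^2 = a*c - b^2 ∧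
      (∀ n, Rep2 a' b' c' n ↔ Rep2 a b c n) := by
  intro N
  induction N using Nat.strong_induction_on with
  | _ N ih =>
    intro a b c hpd hac hN
    have ha : 0 < a := by have := hpd 1 0 (by simp); simpa [Q2] using this
    have hc : 0 < c := by have := hpd 0 1 (by simp); simpa [Q2] using this
    by_cases hred : 2*|b| ≤ a
    · exact ⟨a, b, c, hpd, hred, hac, rfl, fun n => Iff.rfl⟩
    · push_neg at hred
      set q : ℤ := (2*b + a) / (2*a) with hq
      have h2a : (0:ℤ) < 2*a := by linarith
      have hr0 : 0 ≤ 2*b + a - 2*a*q := by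
        rw [hq]
        have := Int.emod_nonneg (2*b + a) (by linarith : (2:ℤ)*a ≠ 0)
        rw [Int.emod_def] at this; linarith
      have hr1 : 2*b + a - 2*a*q < 2*a := by
        rw [hq]
        have := Int.emod_lt_of_pos (2*b + a) h2a
        rw [Int.emod_def] at this; linarith
      set b' : ℤ := b + a*(-q) with hb'
      have habs : 2*|b'| ≤ a := by
        have h1 : -a ≤ 2*b' := by simp only [hb']; linarith
        have h2 : 2*b' ≤ a := by simp only [hb']; linarith
        calc 2*|b'| = |2*b'| := by rw [abs_mul]; simp
        _ ≤ a := abs_le.mpr ⟨by linarith, by linarith⟩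
      set c' : ℤ := a*(-q)^2 + 2*b*(-q) + c with hc'
      have hb2 : b'^2 < b^2 := by
        have h4 : 4*b'^2 ≤ a^2 := by nlinarith [abs_nonneg b', sq_abs b']
        have h5 : a^2 < 4*b^2 := by nlinarith [abs_nonneg b, sq_abs b]
        linarith
      have hpd' : PD2 a b' c' := PD2_shear (-q) hpd
      have hrep' : ∀ n, Rep2 a b' c' n ↔ Rep2 a b c n := fun n => Rep2_shear (-q)
      have hdet' : a*c' - b'^2 = a*c - b^2 := by simp only [hb', hc']; ring
      have hc'pos : 0 < c' := by have := hpd' 0 1 (by simp); simpa [Q2] using this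
      have hcc' : c' < c := by nlinarith
      have hmeas : a.toNat + c'.toNat < N := by
        have : c'.toNat < c.toNat := by omega
        omega
      by_cases hle : a ≤ c'
      · obtain ⟨a2, b2, c2, H1, H2, H3, H4, H5⟩ :=
          ih _ hmeas a b' c' hpd' hle le_rfl
        exact ⟨a2, b2, c2, H1, H2, H3, by rw [H4, hdet'], fun n => (H5 n).trans (hrep' n)⟩
      · push_neg at hle
        obtain ⟨a2, b2, c2, H1, H2, H3, H4, H5⟩ :=
          ih _ (by omega) c' b' a (PD2_swap hpd') (le_of_lt hle) le_rfl
        refine ⟨a2, b2, c2, H1, H2, H3, ?_, fun n => (H5 n).trans (Rep2_swap.trans (hrep' n))⟩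
        rw [H4]; linarith [hdet']


lemma bin_reduce {a b c : ℤ} (hpd : PD2 a b c) :
    ∃ a' b' c', PD2 a' b' c' ∧ 2*|b'| ≤ a' ∧ a' ≤ c' ∧ a'*c' - b'^2 = a*c - b^2 ∧
      (∀ n, Rep2 a' b' c' n ↔ Rep2 a b c n) := by
  by_cases hac : a ≤ c
  · exact bin_reduce_aux (a.toNat + c.toNat) a b c hpd hac le_rfl
  · push_neg at hac
    obtain ⟨a', b', c', H1, H2, H3, H4, H5⟩ :=
      bin_reduce_aux (c.toNat + a.toNat) c b a (PD2_swap hpd) (le_of_lt hac) le_rfl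
    exact ⟨a', b', c', H1, H2, H3, by rw [H4]; ring, fun n => (H5 n).trans Rep2_swap⟩

/-- Hermite bound: a positive-definite integral binary form represents a positive
value `v` with `3 v² ≤ 4 det`. -/
lemma bin_min {a b c : ℤ} (hpd : PD2 a b c) :
    ∃ v, Rep2 a b c v ∧ 0 < v ∧ 3*v^2 ≤ 4*(a*c - b^2) := by
  obtain ⟨a', b', c', H1, H2, H3, H4, H5⟩ := bin_reduce hpd
  have ha' : 0 < a' := by have := H1 1 0 (by simp); simpa [Q2] using this
  refine ⟨a', (H5 a').mp ⟨1, 0, by simp, by unfold Q2; ring⟩, ha', ?_⟩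
  have hb2 : 4*b'^2 ≤ a'^2 := by nlinarith [abs_nonneg b', sq_abs b']
  nlinarith

/-- A positive-definite integral binary form of determinant 1 only represents
sums of two squares. -/
lemma bin_one {a b c : ℤ} (hpd : PD2 a b c) (hdet : a*c - b^2 = 1) :
    ∀ n, Rep2 a b c n → ∃ Y Z : ℤ, n = Y^2 + Z^2 := by
  obtain ⟨a', b', c', H1, H2, H3, H4, H5⟩ := bin_reduce hpd
  rw [hdet] at H4
  have ha' : 0 < a' := by have := H1 1 0 (by simp); simpa [Q2] using this
  have hb2 : 4*b'^2 ≤ a'^2 := by nlinarith [abs_nonneg b', sq_abs b']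
  have ha'1 : a' = 1 := by nlinarith
  have hb'0 : b' = 0 := by nlinarith
  have hc'1 : c' = 1 := by subst ha'1; subst hb'0; linarith
  intro n hn
  obtain ⟨y, z, _, hv⟩ := (H5 n).mpr hn
  subst ha'1; subst hb'0; subst hc'1
  exact ⟨y, z, by unfold Q2 at hv; linarith [hv]⟩




def Q3 (a b c d e f x y z : ℤ) : ℤ :=
  a*x^2 + b*y^2 + c*z^2 + 2*d*x*y + 2*e*x*z + 2*f*y*z

def det3 (a b c d e f : ℤ) : ℤ :=
  a*b*c + 2*d*e*f - a*f^2 - b*e^2 - c*d^2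

def PD3 (a b c d e f : ℤ) : Prop :=
  ∀ x y z : ℤ, ¬(x = 0 ∧ y = 0 ∧ z = 0) → 0 < Q3 a b c d e f x y z

def Rep3 (a b c d e f n : ℤ) : Prop :=
  ∃ x y z : ℤ, ¬(x = 0 ∧ y = 0 ∧ z = 0) ∧ Q3 a b c d e f x y z = n

/-- substitution on (x,y) by the matrix [[p,q],[r,s]] : value identity. -/
lemma sub12_val (a b c d e f p q r s x y z : ℤ) :
    Q3 (a*p^2 + b*r^2 + 2*d*p*r) (a*q^2 + b*s^2 + 2*d*q*s) c
       (a*p*q + b*r*s + d*(p*s + q*r)) (e*p + f*r) (e*q + f*s) x y z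
      = Q3 a b c d e f (p*x + q*y) (r*x + s*y) z := by
  unfold Q3; ring

lemma sub12_det (a b c d e f p q r s : ℤ) (h : p*s - q*r = 1) :
    det3 (a*p^2 + b*r^2 + 2*d*p*r) (a*q^2 + b*s^2 + 2*d*q*s) c
       (a*p*q + b*r*s + d*(p*s + q*r)) (e*p + f*r) (e*q + f*s)
      = det3 a b c d e f := by
  unfold det3
  linear_combination ((p*s - q*r + 1) * (a*b*c + 2*d*e*f - a*f^2 - b*e^2 - c*d^2)) * h

lemma sub12_forall (a b c d e f p q r s : ℤ) (h : p*s - q*r = 1) (P : ℤ → Prop)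
    (hP : ∀ x y z : ℤ, ¬(x = 0 ∧ y = 0 ∧ z = 0) → P (Q3 a b c d e f x y z)) :
    ∀ x y z : ℤ, ¬(x = 0 ∧ y = 0 ∧ z = 0) →
      P (Q3 (a*p^2 + b*r^2 + 2*d*p*r) (a*q^2 + b*s^2 + 2*d*q*s) c
       (a*p*q + b*r*s + d*(p*s + q*r)) (e*p + f*r) (e*q + f*s) x y z) := by
  intro x y z hxyz
  rw [sub12_val]
  refine hP _ _ _ ?_
  rintro ⟨h1, h2, h3⟩
  exact hxyz ⟨by linear_combination s*h1 - q*h2 - x*h,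
    by linear_combination p*h2 - r*h1 - y*h, h3⟩

lemma sub12_rep (a b c d e f p q r s : ℤ) (h : p*s - q*r = 1) (n : ℤ) :
    Rep3 (a*p^2 + b*r^2 + 2*d*p*r) (a*q^2 + b*s^2 + 2*d*q*s) c
       (a*p*q + b*r*s + d*(p*s + q*r)) (e*p + f*r) (e*q + f*s) n
      ↔ Rep3 a b c d e f n := by
  constructor
  · rintro ⟨x, y, z, hxyz, hv⟩
    rw [sub12_val] at hv
    refine ⟨p*x + q*y, r*x + s*y, z, ?_, hv⟩
    rintro ⟨h1, h2, h3⟩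
    exact hxyz ⟨by linear_combination s*h1 - q*h2 - x*h,
      by linear_combination p*h2 - r*h1 - y*h, h3⟩
  · rintro ⟨x, y, z, hxyz, hv⟩
    refine ⟨s*x - q*y, -r*x + p*y, z, ?_, ?_⟩
    · rintro ⟨h1, h2, h3⟩
      exact hxyz ⟨by linear_combination p*h1 + q*h2 - x*h,
        by linear_combination r*h1 + s*h2 - y*h, h3⟩
    · rw [sub12_val]
      have e1 : p*(s*x - q*y) + q*(-r*x + p*y) = x := by linear_combination x*h
      have e2 : r*(s*x - q*y) + s*(-r*x + p*y) = y := by linear_combination y*h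
      rw [e1, e2]; exact hv


/-- substitution on (x,z) by the matrix [[p,q],[r,s]] : value identity. -/
lemma sub13_val (a b c d e f p q r s x y z : ℤ) :
    Q3 (a*p^2 + c*r^2 + 2*e*p*r) b (a*q^2 + c*s^2 + 2*e*q*s)
       (d*p + f*r) (a*p*q + c*r*s + e*(p*s + q*r)) (d*q + f*s) x y z
      = Q3 a b c d e f (p*x + q*z) y (r*x + s*z) := by
  unfold Q3; ring

lemma sub13_det (a b c d e f p q r s : ℤ) (h : p*s - q*r = 1) :
    det3 (a*p^2 + c*r^2 + 2*e*p*r) b (a*q^2 + c*s^2 + 2*e*q*s)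
       (d*p + f*r) (a*p*q + c*r*s + e*(p*s + q*r)) (d*q + f*s)
      = det3 a b c d e f := by
  unfold det3
  linear_combination ((p*s - q*r + 1) * (a*b*c + 2*d*e*f - a*f^2 - b*e^2 - c*d^2)) * h

lemma sub13_forall (a b c d e f p q r s : ℤ) (h : p*s - q*r = 1) (P : ℤ → Prop)
    (hP : ∀ x y z : ℤ, ¬(x = 0 ∧ y = 0 ∧ z = 0) → P (Q3 a b c d e f x y z)) :
    ∀ x y z : ℤ, ¬(x = 0 ∧ y = 0 ∧ z = 0) →
      P (Q3 (a*p^2 + c*r^2 + 2*e*p*r) b (a*q^2 + c*s^2 + 2*e*q*s)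
       (d*p + f*r) (a*p*q + c*r*s + e*(p*s + q*r)) (d*q + f*s) x y z) := by
  intro x y z hxyz
  rw [sub13_val]
  refine hP _ _ _ ?_
  rintro ⟨h1, h2, h3⟩
  exact hxyz ⟨by linear_combination s*h1 - q*h3 - x*h, h2,
    by linear_combination p*h3 - r*h1 - z*h⟩

lemma sub13_rep (a b c d e f p q r s : ℤ) (h : p*s - q*r = 1) (n : ℤ) :
    Rep3 (a*p^2 + c*r^2 + 2*e*p*r) b (a*q^2 + c*s^2 + 2*e*q*s)
       (d*p + f*r) (a*p*q + c*r*s + e*(p*s + q*r)) (d*q + f*s) n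
      ↔ Rep3 a b c d e f n := by
  constructor
  · rintro ⟨x, y, z, hxyz, hv⟩
    rw [sub13_val] at hv
    refine ⟨p*x + q*z, y, r*x + s*z, ?_, hv⟩
    rintro ⟨h1, h2, h3⟩
    exact hxyz ⟨by linear_combination s*h1 - q*h3 - x*h, h2,
      by linear_combination p*h3 - r*h1 - z*h⟩
  · rintro ⟨x, y, z, hxyz, hv⟩
    refine ⟨s*x - q*z, y, -r*x + p*z, ?_, ?_⟩
    · rintro ⟨h1, h2, h3⟩
      exact hxyz ⟨by linear_combination p*h1 + q*h3 - x*h, h2,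
        by linear_combination r*h1 + s*h3 - z*h⟩
    · rw [sub13_val]
      have e1 : p*(s*x - q*z) + q*(-r*x + p*z) = x := by linear_combination x*h
      have e2 : r*(s*x - q*z) + s*(-r*x + p*z) = z := by linear_combination z*h
      rw [e1, e2]; exact hv


lemma sub12' (a b c d e f p q r s a' b' c' d' e' f' : ℤ) (h : p*s - q*r = 1)
    (h1 : a' = a*p^2 + b*r^2 + 2*d*p*r) (h2 : b' = a*q^2 + b*s^2 + 2*d*q*s) (h3 : c' = c)
    (h4 : d' = a*p*q + b*r*s + d*(p*s + q*r)) (h5 : e' = e*p + f*r) (h6 : f' = e*q + f*s) :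
    det3 a' b' c' d' e' f' = det3 a b c d e f ∧
    (∀ n, Rep3 a' b' c' d' e' f' n ↔ Rep3 a b c d e f n) ∧
    (∀ (P : ℤ → Prop), (∀ x y z : ℤ, ¬(x = 0 ∧ y = 0 ∧ z = 0) → P (Q3 a b c d e f x y z)) →
       ∀ x y z : ℤ, ¬(x = 0 ∧ y = 0 ∧ z = 0) → P (Q3 a' b' c' d' e' f' x y z)) ∧
    (∀ x y z, Q3 a' b' c' d' e' f' x y z = Q3 a b c d e f (p*x+q*y) (r*x+s*y) z) := by
  subst h1 h2 h3 h4 h5 h6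
  exact ⟨sub12_det _ _ _ _ _ _ _ _ _ _ h, sub12_rep _ _ _ _ _ _ _ _ _ _ h,
    fun P hP => sub12_forall _ _ _ _ _ _ _ _ _ _ h P hP, sub12_val _ _ _ _ _ _ _ _ _ _⟩

lemma sub13' (a b c d e f p q r s a' b' c' d' e' f' : ℤ) (h : p*s - q*r = 1)
    (h1 : a' = a*p^2 + c*r^2 + 2*e*p*r) (h2 : b' = b) (h3 : c' = a*q^2 + c*s^2 + 2*e*q*s)
    (h4 : d' = d*p + f*r) (h5 : e' = a*p*q + c*r*s + e*(p*s + q*r)) (h6 : f' = d*q + f*s) :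
    det3 a' b' c' d' e' f' = det3 a b c d e f ∧
    (∀ n, Rep3 a' b' c' d' e' f' n ↔ Rep3 a b c d e f n) ∧
    (∀ (P : ℤ → Prop), (∀ x y z : ℤ, ¬(x = 0 ∧ y = 0 ∧ z = 0) → P (Q3 a b c d e f x y z)) →
       ∀ x y z : ℤ, ¬(x = 0 ∧ y = 0 ∧ z = 0) → P (Q3 a' b' c' d' e' f' x y z)) ∧
    (∀ x y z, Q3 a' b' c' d' e' f' x y z = Q3 a b c d e f (p*x+q*z) y (r*x+s*z)) := by
  subst h1 h2 h3 h4 h5 h6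
  exact ⟨sub13_det _ _ _ _ _ _ _ _ _ _ h, sub13_rep _ _ _ _ _ _ _ _ _ _ h,
    fun P hP => sub13_forall _ _ _ _ _ _ _ _ _ _ h P hP, sub13_val _ _ _ _ _ _ _ _ _ _⟩



lemma Q3_e1 (a b c d e f : ℤ) : Q3 a b c d e f 1 0 0 = a := by unfold Q3; ring

lemma tern_normalize (a b c d e f : ℤ) (hpd : PD3 a b c d e f) :
    ∃ (M b' c' d' e' f' : ℤ), 0 < M ∧
      det3 M b' c' d' e' f' = det3 a b c d e f ∧
      (∀ n, Rep3 M b' c' d' e' f' n ↔ Rep3 a b c d e f n) ∧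
      (∀ x y z : ℤ, ¬(x = 0 ∧ y = 0 ∧ z = 0) → M ≤ Q3 M b' c' d' e' f' x y z) := by
  classical
  set S : Set ℕ := {k : ℕ | ∃ x y z : ℤ, ¬(x = 0 ∧ y = 0 ∧ z = 0) ∧
      Q3 a b c d e f x y z = (k : ℤ)} with hS
  have ha : 0 < a := by have := hpd 1 0 0 (by simp); simpa [Q3_e1] using this
  have hSne : S.Nonempty := ⟨a.toNat, 1, 0, 0, by simp, by rw [Q3_e1]; omega⟩
  set m : ℕ := sInf S with hm
  obtain ⟨x₀, y₀, z₀, hv₀ne, hv₀⟩ : m ∈ S := Nat.sInf_mem hSne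
  set M : ℤ := (m : ℤ) with hMdef
  have hMpos : 0 < M := by
    have := hpd x₀ y₀ z₀ hv₀ne; rw [hv₀] at this; exact this
  have hmin : ∀ x y z : ℤ, ¬(x = 0 ∧ y = 0 ∧ z = 0) → M ≤ Q3 a b c d e f x y z := by
    intro x y z hne
    have hpos := hpd x y z hne
    have hk : ((Q3 a b c d e f x y z).toNat : ℤ) = Q3 a b c d e f x y z :=
      Int.toNat_of_nonneg hpos.le
    have : (Q3 a b c d e f x y z).toNat ∈ S := ⟨x, y, z, hne, hk.symm ▸ rfl⟩
    have := Nat.sInf_le this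
    omega
  -- primitivity
  set g2 : ℕ := Int.gcd x₀ y₀ with hg2
  set g : ℕ := Int.gcd (g2 : ℤ) z₀ with hg
  have hdx : (g : ℤ) ∣ x₀ := dvd_trans (Int.gcd_dvd_left _ _) (Int.gcd_dvd_left _ _)
  have hdy : (g : ℤ) ∣ y₀ := dvd_trans (Int.gcd_dvd_left _ _) (Int.gcd_dvd_right _ _)
  have hdz : (g : ℤ) ∣ z₀ := Int.gcd_dvd_right _ _
  obtain ⟨x₂, hx₂⟩ := hdx
  obtain ⟨y₂, hy₂⟩ := hdy
  obtain ⟨z₂, hz₂⟩ := hdz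
  have h2ne : ¬(x₂ = 0 ∧ y₂ = 0 ∧ z₂ = 0) := by
    rintro ⟨rfl, rfl, rfl⟩
    exact hv₀ne ⟨by simp [hx₂], by simp [hy₂], by simp [hz₂]⟩
  have hQg : (g : ℤ)^2 * Q3 a b c d e f x₂ y₂ z₂ = M := by
    rw [← hv₀, hx₂, hy₂, hz₂]; unfold Q3; ring
  have ht := hpd x₂ y₂ z₂ h2ne
  have htm := hmin x₂ y₂ z₂ h2ne
  have hg1 : (g : ℤ) = 1 := by
    have hg0 : (0:ℤ) ≤ (g:ℤ) := Int.natCast_nonneg g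
    rcases eq_or_lt_of_le hg0 with h0 | h1
    · exfalso; rw [← h0] at hQg; simp at hQg; omega
    · by_contra hne
      have h2 : (2:ℤ) ≤ (g:ℤ) := by omega
      nlinarith [mul_nonneg (mul_nonneg (by linarith : (0:ℤ) ≤ (g:ℤ) - 2)
        (by linarith : (0:ℤ) ≤ (g:ℤ) + 2)) ht.le]
  -- goal after normalization
  by_cases hg20 : g2 = 0
  · -- x₀ = y₀ = 0, z₀ = ±1
    obtain ⟨hx0, hy0⟩ : x₀ = 0 ∧ y₀ = 0 := Int.gcd_eq_zero_iff.mp hg20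
    have hz1 : z₀ = 1 ∨ z₀ = -1 := by
      have hna : Int.gcd ((0:ℕ) : ℤ) z₀ = z₀.natAbs := by simp [Int.gcd]
      rw [hg, hg20] at hg1
      rw [hna] at hg1
      omega
    have hps : (0:ℤ)*0 - (-z₀)*z₀ = 1 := by rcases hz1 with h | h <;> subst h <;> norm_num
    rw [hx0, hy0] at hv₀
    unfold Q3 at hv₀
    obtain ⟨D1, R1, F1, V1⟩ := sub13' a b c d e f 0 (-z₀) z₀ 0
      M b (a*z₀^2) (f*z₀) (-(e*z₀^2)) (-(d*z₀)) hps
      (by linear_combination -hv₀) rfl (by ring) (by ring) (by ring) (by ring)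
    exact ⟨M, b, a*z₀^2, f*z₀, -(e*z₀^2), -(d*z₀), hMpos, D1, R1,
      F1 (fun t => M ≤ t) hmin⟩
  · have hg2pos : (0:ℤ) < (g2:ℤ) := by
      have := Int.natCast_nonneg g2
      rcases eq_or_lt_of_le this with h0 | h1
      · exfalso; apply hg20; omega
      · exact h1
    obtain ⟨x₁, hx₁⟩ : ((g2:ℤ)) ∣ x₀ := Int.gcd_dvd_left _ _
    obtain ⟨y₁, hy₁⟩ : ((g2:ℤ)) ∣ y₀ := Int.gcd_dvd_right _ _
    set α : ℤ := Int.gcdA x₀ y₀ with hα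
    set β : ℤ := Int.gcdB x₀ y₀ with hβ
    have hBez : (g2:ℤ) = x₀*α + y₀*β := Int.gcd_eq_gcd_ab x₀ y₀
    have hcan : (g2:ℤ) * (x₁*α + y₁*β) = (g2:ℤ) * 1 := by
      linear_combination -hBez - α*hx₁ - β*hy₁
    have hps1 : x₁*α - (-β)*y₁ = 1 := by
      have := mul_left_cancel₀ (ne_of_gt hg2pos) hcan
      linear_combination this
    set A1a : ℤ := a*x₁^2 + b*y₁^2 + 2*d*x₁*y₁ with hA1a
    set A1b : ℤ := a*β^2 + b*α^2 - 2*d*β*α with hA1b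
    set A1d : ℤ := -(a*x₁*β) + b*y₁*α + d*(x₁*α - β*y₁) with hA1d
    set A1e : ℤ := e*x₁ + f*y₁ with hA1e
    set A1f : ℤ := -(e*β) + f*α with hA1f
    obtain ⟨D1, R1, F1, V1⟩ := sub12' a b c d e f x₁ (-β) y₁ α A1a A1b c A1d A1e A1f hps1
      (by rw [hA1a]; try ring) (by rw [hA1b]; try ring) rfl (by rw [hA1d]; try ring)
      (by rw [hA1e]; try ring) (by rw [hA1f]; try ring)
    -- second transform
    set γ : ℤ := Int.gcdA (g2:ℤ) z₀ with hγ
    set δ : ℤ := Int.gcdB (g2:ℤ) z₀ with hδ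
    have hBez2 : (1:ℤ) = (g2:ℤ)*γ + z₀*δ := by
      have := Int.gcd_eq_gcd_ab ((g2:ℤ)) z₀
      rw [← hg] at this
      rw [hg1] at this
      exact this
    have hps2 : (g2:ℤ)*γ - (-δ)*z₀ = 1 := by linear_combination -hBez2
    have hA2aval : Q3 A1a A1b c A1d A1e A1f (g2:ℤ) 0 z₀ = M := by
      rw [V1]
      rw [show x₁*((g2:ℤ)) + -β*0 = x₀ by linear_combination -hx₁,
          show y₁*((g2:ℤ)) + α*0 = y₀ by linear_combination -hy₁]
      exact hv₀
    have hA2a : M = A1a*(g2:ℤ)^2 + c*z₀^2 + 2*A1e*(g2:ℤ)*z₀ := by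
      unfold Q3 at hA2aval
      linear_combination -hA2aval
    obtain ⟨D2, R2, F2, V2⟩ := sub13' A1a A1b c A1d A1e A1f ((g2:ℤ)) (-δ) z₀ γ
      M A1b (A1a*δ^2 + c*γ^2 - 2*A1e*δ*γ) (A1d*(g2:ℤ) + A1f*z₀)
      (-(A1a*(g2:ℤ)*δ) + c*z₀*γ + A1e*((g2:ℤ)*γ - δ*z₀)) (-(A1d*δ) + A1f*γ)
      hps2 hA2a rfl (by ring) (by ring) (by ring) (by ring)
    exact ⟨M, A1b, A1a*δ^2 + c*γ^2 - 2*A1e*δ*γ, A1d*(g2:ℤ) + A1f*z₀,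
      -(A1a*(g2:ℤ)*δ) + c*z₀*γ + A1e*((g2:ℤ)*γ - δ*z₀), -(A1d*δ) + A1f*γ,
      hMpos, D2.trans D1, fun n => (R2 n).trans (R1 n),
      F2 (fun t => M ≤ t) (F1 (fun t => M ≤ t) hmin)⟩

lemma tern_min_one (M b c d e f : ℤ) (hM : 0 < M) (hdet : det3 M b c d e f = 1)
    (hmin : ∀ x y z : ℤ, ¬(x = 0 ∧ y = 0 ∧ z = 0) → M ≤ Q3 M b c d e f x y z) :
    M = 1 := by
  have key : ∀ y z : ℤ, ¬(y = 0 ∧ z = 0) →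
      3*M^2 ≤ 4 * Q2 (M*b - d^2) (M*f - d*e) (M*c - e^2) y z := by
    intro y z hyz
    set t : ℤ := d*y + e*z with ht
    set x : ℤ := -((2*t + M) / (2*M)) with hx
    have h2M : (0:ℤ) < 2*M := by linarith
    have hq0 : 0 ≤ 2*t + M - 2*M*((2*t + M)/(2*M)) := by
      have := Int.emod_nonneg (2*t + M) (by linarith : (2:ℤ)*M ≠ 0)
      rw [Int.emod_def] at this; linarith
    have hq1 : 2*t + M - 2*M*((2*t + M)/(2*M)) < 2*M := by
      have := Int.emod_lt_of_pos (2*t + M) h2M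
      rw [Int.emod_def] at this; linarith
    have h4r : 4*(M*x + t)^2 ≤ M^2 := by
      have hxe : M*x + t = t - M*((2*t + M)/(2*M)) := by rw [hx]; ring
      nlinarith [hxe, hq0, hq1]
    have hid : M * Q3 M b c d e f x y z
        = (M*x + t)^2 + Q2 (M*b - d^2) (M*f - d*e) (M*c - e^2) y z := by
      rw [ht]; unfold Q3 Q2; ring
    have hge := hmin x y z (by rintro ⟨h1, h2, h3⟩; exact hyz ⟨h2, h3⟩)
    nlinarith [hid, hge, h4r]
  have hpd2 : PD2 (M*b - d^2) (M*f - d*e) (M*c - e^2) := by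
    intro y z hyz; have := key y z hyz; nlinarith
  have hdet2 : (M*b - d^2)*(M*c - e^2) - (M*f - d*e)^2 = M := by
    have h : (M*b - d^2)*(M*c - e^2) - (M*f - d*e)^2 = M * det3 M b c d e f := by
      unfold det3; ring
    rw [h, hdet]; ring
  obtain ⟨v, hvrep, hvpos, hv3⟩ := bin_min hpd2
  rw [hdet2] at hv3
  obtain ⟨y, z, hyz, hval⟩ := hvrep
  have h34 := key y z hyz
  rw [hval] at h34
  have h9 : 9*M^4 ≤ 16*v^2 := by nlinarith [h34, hM, hvpos]
  have h27 : 27*M^4 ≤ 64*M := by linarith [h9, hv3]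
  have hle : M ≤ 1 := by
    by_contra hgt
    push_neg at hgt
    have hM2 : (2:ℤ) ≤ M := by omega
    have h8 : (8:ℤ) ≤ M^3 := by nlinarith [hM2]
    nlinarith [mul_nonneg (by linarith : (0:ℤ) ≤ M^3 - 8) hM.le]
  omega

theorem tern_det_one_rep (a b c d e f n : ℤ) (hpd : PD3 a b c d e f)
    (hdet : det3 a b c d e f = 1) (hrep : Rep3 a b c d e f n) :
    ∃ X Y Z : ℤ, n = X^2 + Y^2 + Z^2 := by
  obtain ⟨M, b1, c1, d1, e1, f1, hM, hdet1, hrep1, hmin1⟩ := tern_normalize a b c d e f hpd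
  rw [hdet] at hdet1
  have hM1 : M = 1 := tern_min_one M b1 c1 d1 e1 f1 hM hdet1 hmin1
  subst hM1
  obtain ⟨D1, R1, F1, V1⟩ := sub12' 1 b1 c1 d1 e1 f1 1 (-d1) 0 1
    1 (b1 - d1^2) c1 0 e1 (f1 - e1*d1) (by norm_num) (by ring) (by ring) rfl
    (by ring) (by ring) (by ring)
  obtain ⟨D2, R2, F2, V2⟩ := sub13' 1 (b1 - d1^2) c1 0 e1 (f1 - e1*d1) 1 (-e1) 0 1
    1 (b1 - d1^2) (c1 - e1^2) 0 0 (f1 - e1*d1) (by norm_num) (by ring) rfl (by ring)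
    (by ring) (by ring) (by ring)
  have hdetF : det3 1 (b1 - d1^2) (c1 - e1^2) 0 0 (f1 - e1*d1) = 1 := by
    rw [D2, D1]; exact hdet1
  have hBC : (b1 - d1^2)*(c1 - e1^2) - (f1 - e1*d1)^2 = 1 := by
    unfold det3 at hdetF; linear_combination hdetF
  have hmin2 : ∀ x y z : ℤ, ¬(x = 0 ∧ y = 0 ∧ z = 0) →
      1 ≤ Q3 1 (b1 - d1^2) (c1 - e1^2) 0 0 (f1 - e1*d1) x y z :=
    F2 (fun u => 1 ≤ u) (F1 (fun u => 1 ≤ u) hmin1)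
  have hsplit : ∀ x y z : ℤ, Q3 1 (b1 - d1^2) (c1 - e1^2) 0 0 (f1 - e1*d1) x y z
      = x^2 + Q2 (b1 - d1^2) (f1 - e1*d1) (c1 - e1^2) y z := by
    intro x y z; unfold Q3 Q2; ring
  have hpd2 : PD2 (b1 - d1^2) (f1 - e1*d1) (c1 - e1^2) := by
    intro y z hyz
    have h1 := hmin2 0 y z (by tauto)
    have h2 := hsplit 0 y z
    nlinarith [h1, h2]
  obtain ⟨x, y, z, hxyz, hval⟩ :=
    ((R2 n).trans ((R1 n).trans (hrep1 n))).mpr hrep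
  rw [hsplit] at hval
  by_cases hyz : y = 0 ∧ z = 0
  · obtain ⟨rfl, rfl⟩ := hyz
    refine ⟨x, 0, 0, ?_⟩
    unfold Q2 at hval
    linarith [hval]
  · have hr2 : Rep2 (b1 - d1^2) (f1 - e1*d1) (c1 - e1^2) (n - x^2) :=
      ⟨y, z, hyz, by linarith [hval]⟩
    obtain ⟨Y, Z, hYZ⟩ := bin_one hpd2 hBC _ hr2
    exact ⟨x, Y, Z, by linarith⟩

lemma one_le_sq {z : ℤ} (hz : z ≠ 0) : 1 ≤ z^2 := by
  rcases lt_or_gt_of_ne hz with h | h <;> nlinarith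

set_option maxHeartbeats 1000000 in
theorem sum_three_squares (n : ℕ) :
    ∃ X Y Z : ℤ, ((8*n+3 : ℕ) : ℤ) = X^2 + Y^2 + Z^2 := by
  set N : ℕ := 8*n+3 with hNdef
  have hN3 : N % 8 = 3 := by omega
  have hNodd : Odd N := by rw [Nat.odd_iff]; omega
  set a₀ : ℕ := 4*n+1 with ha₀
  have hco4 : Nat.Coprime a₀ 4 := by
    have : Nat.gcd 4 a₀ = Nat.gcd 4 1 := by
      rw [show a₀ = 1 + n*4 by omega]
      exact Nat.gcd_add_mul_right_right 4 1 n
    unfold Nat.Coprime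
    rw [Nat.gcd_comm]
    simpa using this
  have hcoN : Nat.Coprime a₀ N := by
    have : Nat.gcd a₀ N = Nat.gcd a₀ 1 := by
      rw [show N = 1 + 2*a₀ by omega]
      exact Nat.gcd_add_mul_right_right a₀ 1 2
    unfold Nat.Coprime
    simpa using this
  have hco : Nat.Coprime a₀ (4*N) := Nat.Coprime.mul_right hco4 hcoN
  haveI : NeZero (4*N) := ⟨by omega⟩
  have hunit : IsUnit ((a₀ : ℕ) : ZMod (4*N)) := (ZMod.isUnit_iff_coprime a₀ (4*N)).mpr hco
  obtain ⟨p, hpgt, hpp, hpmod⟩ := Nat.forall_exists_prime_gt_and_eq_mod hunit (4*N)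
  haveI : Fact p.Prime := ⟨hpp⟩
  have hmod : p ≡ a₀ [MOD 4*N] := (ZMod.natCast_eq_natCast_iff p a₀ (4*N)).mp hpmod
  have hp4 : p % 4 = 1 := by
    have h := hmod.of_dvd (by omega : (4:ℕ) ∣ 4*N)
    have : p % 4 = a₀ % 4 := h
    omega
  have hmodN : p ≡ a₀ [MOD N] := hmod.of_dvd ⟨4, by ring⟩
  have hpN : p % N = a₀ % N := hmodN
  have hNpos : 0 < N := by omega
  have hplarge' : 4*N < p := hpgt
  have hNdvd : N ∣ 2*p + 1 := by
    have ha₀le : a₀ ≤ p := by omega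
    obtain ⟨q, hq⟩ := (Nat.modEq_iff_dvd' ha₀le).mp hmodN.symm
    refine ⟨2*q+1, ?_⟩
    rw [show N*(2*q+1) = 2*(N*q) + N by ring]
    omega
  obtain ⟨C, hC⟩ := hNdvd
  have hpodd : p % 2 = 1 := by omega
  have hplarge : 4*N < p := hpgt
  have hppN : ¬ p ∣ N := fun hdvd => by
    have := Nat.le_of_dvd hNpos hdvd
    omega
  -- Jacobi symbol computation
  have hJ2 : jacobiSym 2 N = -1 := by
    rw [jacobiSym.at_two hNodd, ZMod.χ₈_nat_eq_if_mod_eight]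
    rw [hN3]
    norm_num [show N % 2 = 1 by omega]
  have hJm1 : jacobiSym (-1) N = -1 := by
    rw [jacobiSym.at_neg_one hNodd, ZMod.χ₄_nat_eq_if_mod_four]
    norm_num [show N % 2 = 1 by omega, show N % 4 = 3 by omega]
  have hJa₀ : jacobiSym (a₀ : ℤ) N = 1 := by
    have hmm : ((2*a₀ : ℕ) : ℤ) % N = (-1 : ℤ) % N := by
      have h2 : ((2*a₀ : ℕ) : ℤ) = -1 + (N:ℤ)*1 := by push_cast; omega
      rw [h2, Int.add_mul_emod_self_left]
    have hml : jacobiSym ((2*a₀ : ℕ) : ℤ) N = jacobiSym (-1) N := jacobiSym.mod_left' hmm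
    have hmul : jacobiSym ((2*a₀ : ℕ) : ℤ) N = jacobiSym 2 N * jacobiSym (a₀ : ℤ) N := by
      push_cast
      rw [← jacobiSym.mul_left]
    rw [hml, hJm1] at hmul
    rw [hJ2] at hmul
    linarith
  have hJNp : jacobiSym (N : ℤ) p = 1 := by
    have hrec : jacobiSym (p : ℤ) N = jacobiSym (N : ℤ) p :=
      jacobiSym.quadratic_reciprocity_one_mod_four hp4 hNodd
    have hml : jacobiSym (p : ℤ) N = jacobiSym (a₀ : ℤ) N := by
      refine jacobiSym.mod_left' ?_
      have := congrArg (fun t : ℕ => (t : ℤ)) hpN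
      push_cast at this
      exact this
    rw [← hrec, hml, hJa₀]
  have hNne : ((N : ℕ) : ZMod p) ≠ 0 := by
    rw [Ne, ZMod.natCast_eq_zero_iff]
    exact hppN
  have hsqN : IsSquare ((N : ℕ) : ZMod p) := by
    have h := (legendreSym.eq_one_iff' p (a := N) hNne).mp ?_
    · exact h
    · rw [jacobiSym.legendreSym.to_jacobiSym]
      exact_mod_cast hJNp
  have hsqm1 : IsSquare (-1 : ZMod p) := by
    rw [ZMod.exists_sq_eq_neg_one_iff]
    omega
  have hsq : IsSquare (-((N : ℕ) : ZMod p)) := by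
    have := hsqm1.mul hsqN
    simpa using this
  obtain ⟨s, hs⟩ := hsq
  set d₀ : ZMod p := s * ((N : ℕ) : ZMod p)⁻¹ with hd₀def
  have hd₀ : ((N : ℕ) : ZMod p) * d₀^2 = -1 := by
    rw [hd₀def]
    have h1 : ((N:ℕ):ZMod p) * (s * ((N:ℕ):ZMod p)⁻¹)^2
        = (s*s) * (((N:ℕ):ZMod p) * ((N:ℕ):ZMod p)⁻¹) * ((N:ℕ):ZMod p)⁻¹ := by ring
    rw [h1, mul_inv_cancel₀ hNne, mul_one, ← hs, neg_mul, mul_inv_cancel₀ hNne]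
  set D : ℕ := ZMod.val d₀ with hD
  have hDcast : ((D : ℕ) : ZMod p) = d₀ := ZMod.natCast_rightInverse d₀
  set dd : ℕ := if D % 2 = 1 then D else D + p with hdd
  have hddodd : dd % 2 = 1 := by
    rw [hdd]; split <;> omega
  have hddcast : ((dd : ℕ) : ZMod p) = d₀ := by
    rw [hdd]; split
    · exact hDcast
    · push_cast
      rw [ZMod.natCast_self]
      simpa using hDcast
  have hpdvd : p ∣ N * dd^2 + 1 := by
    rw [← ZMod.natCast_eq_zero_iff]
    have hd₀' := hd₀
    push_cast at hd₀' ⊢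
    rw [hddcast]
    linear_combination hd₀'
  have h2dvd : 2 ∣ N * dd^2 + 1 := by
    have hN2 : N % 2 = 1 := by omega
    have h1 : (N * dd^2) % 2 = 1 := by
      rw [Nat.mul_mod, Nat.pow_mod, hN2, hddodd]
    omega
  have h2p : 2*p ∣ N * dd^2 + 1 :=
    Nat.Coprime.mul_dvd_of_dvd_of_dvd
      (Nat.coprime_two_left.mpr (Nat.odd_iff.mpr hpodd)) h2dvd hpdvd
  obtain ⟨E, hE⟩ := h2p
  -- pass to ℤ
  have hC' : (N:ℤ) * (C:ℤ) = 2*(p:ℤ)+1 := by exact_mod_cast congrArg (Nat.cast : ℕ → ℤ) hC.symm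
  have hE' : 2*(p:ℤ)*(E:ℤ) = (N:ℤ)*(dd:ℤ)^2+1 := by exact_mod_cast congrArg (Nat.cast : ℕ → ℤ) hE.symm
  have hdet : det3 (N:ℤ) (C:ℤ) (E:ℤ) 1 0 (dd:ℤ) = 1 := by
    unfold det3
    linear_combination (E:ℤ) * hC' + hE'
  have hp0 : (0:ℤ) < (p:ℤ) := by exact_mod_cast hpp.pos
  have hN0 : (0:ℤ) < (N:ℤ) := by exact_mod_cast hNpos
  have hid : ∀ x y z : ℤ, 2*(p:ℤ)*(N:ℤ) * Q3 (N:ℤ) (C:ℤ) (E:ℤ) 1 0 (dd:ℤ) x y z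
      = 2*(p:ℤ)*((N:ℤ)*x+y)^2 + (2*(p:ℤ)*y + (N:ℤ)*(dd:ℤ)*z)^2 + (N:ℤ)*z^2 := by
    intro x y z
    unfold Q3
    linear_combination (2*(p:ℤ)*y^2) * hC' + ((N:ℤ)*z^2) * hE'
  have hpd : PD3 (N:ℤ) (C:ℤ) (E:ℤ) 1 0 (dd:ℤ) := by
    intro x y z hne
    have hQ := hid x y z
    have hRHS : 0 < 2*(p:ℤ)*((N:ℤ)*x+y)^2 + (2*(p:ℤ)*y + (N:ℤ)*(dd:ℤ)*z)^2 + (N:ℤ)*z^2 := by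
      by_cases hz : z = 0
      · by_cases hy : y = 0
        · have hx : x ≠ 0 := by tauto
          subst hz hy
          have h1 := one_le_sq hx
          nlinarith [mul_nonneg (mul_nonneg hN0.le hN0.le) (by linarith : (0:ℤ) ≤ x^2 - 1),
            mul_pos hp0 (mul_pos hN0 hN0),
            mul_nonneg hp0.le (mul_nonneg (mul_nonneg hN0.le hN0.le)
              (by linarith : (0:ℤ) ≤ x^2 - 1))]
        · subst hz
          have h1 := one_le_sq hy
          nlinarith [sq_nonneg ((N:ℤ)*x+y), mul_pos hp0 hp0,
            mul_nonneg (mul_nonneg hp0.le hp0.le) (by linarith : (0:ℤ) ≤ y^2 - 1),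
            mul_nonneg hp0.le (sq_nonneg ((N:ℤ)*x+y))]
      · have h1 := one_le_sq hz
        nlinarith [sq_nonneg ((N:ℤ)*x+y), sq_nonneg (2*(p:ℤ)*y + (N:ℤ)*(dd:ℤ)*z),
          mul_nonneg hp0.le (sq_nonneg ((N:ℤ)*x+y)),
          mul_nonneg hN0.le (by linarith : (0:ℤ) ≤ z^2 - 1)]
    by_contra hle
    push_neg at hle
    have hK : (0:ℤ) < 2*(p:ℤ)*(N:ℤ) := by positivity
    have hprod : 2*(p:ℤ)*(N:ℤ) * Q3 (N:ℤ) (C:ℤ) (E:ℤ) 1 0 (dd:ℤ) x y z ≤ 0 := by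
      nlinarith [hK, hle]
    linarith [hQ, hRHS, hprod]
  have hrep : Rep3 (N:ℤ) (C:ℤ) (E:ℤ) 1 0 (dd:ℤ) (N:ℤ) :=
    ⟨1, 0, 0, by simp, by unfold Q3; ring⟩
  exact tern_det_one_rep _ _ _ _ _ _ _ hpd hdet hrep

lemma two_tri (y : ℤ) : 2 * tri y = y^2 + y := by
  have hdvd : (2:ℤ) ∣ y*(y+1) := even_iff_two_dvd.mp (Int.even_mul_succ_self y)
  show 2 * (y * (y+1) / 2) = y^2 + y
  rw [mul_comm (2:ℤ), Int.ediv_mul_cancel hdvd]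
  ring

lemma combine (nz A B C : ℤ) (hoddA : Odd A) (hoddC : Odd C)
    (hdvd : (8:ℤ) ∣ A - B) (h : 8*nz+3 = A^2+B^2+C^2) :
    ∃ x y z : ℤ, nz = 4 * x ^ 2 + 2 * tri y + tri z := by
  obtain ⟨k, hk⟩ := hdvd
  have hoddB : Odd B := by
    rcases hoddA with ⟨j, hj⟩
    exact ⟨j - 4*k, by omega⟩
  have hodds : Odd (B + 4*k) := by
    rcases hoddB with ⟨j, hj⟩
    exact ⟨j + 2*k, by omega⟩
  obtain ⟨y, hy⟩ := hodds
  obtain ⟨z, hz⟩ := hoddC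
  have hA : A = 2*y+1+4*k := by omega
  have hB : B = 2*y+1-4*k := by omega
  rw [hA, hB, hz] at h
  have ty := two_tri y
  have tz := two_tri z
  have h8e : 8*nz = 32*k^2 + 16*(tri y) + 8*(tri z) := by
    linear_combination h - 8*ty - 4*tz
  exact ⟨k, y, z, by linarith⟩

theorem result (n : ℕ) : ∃ x y z : ℤ, (n : ℤ) = 4 * x ^ 2 + 2 * tri y + tri z := by
  obtain ⟨X, Y, Z, h0⟩ := sum_three_squares n
  have h : 8*(n:ℤ)+3 = X^2+Y^2+Z^2 := by push_cast at h0; linarith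
  have hcast : ((X:ZMod 8))^2 + (Y:ZMod 8)^2 + (Z:ZMod 8)^2 = 3 := by
    have hc := congrArg (fun t : ℤ => (t : ZMod 8)) h
    push_cast at hc
    have h80 : (8 : ZMod 8) = 0 := by decide
    rw [h80] at hc
    rw [zero_mul, zero_add] at hc
    exact hc.symm
  have fact1 : ∀ u v w : ZMod 8, u^2+v^2+w^2 = 3 → u^2 = 1 ∧ v^2 = 1 ∧ w^2 = 1 := by decide
  have oddOf : ∀ W : ℤ, ((W:ZMod 8))^2 = 1 → Odd W := by
    intro W hW
    rcases Int.even_or_odd W with ⟨j, hj⟩ | hO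
    · exfalso
      subst hj
      push_cast at hW
      revert hW
      have : ∀ t : ZMod 8, (t+t)^2 ≠ 1 := by decide
      exact this _
    · exact hO
  obtain ⟨hu1, hv1, hw1⟩ := fact1 _ _ _ hcast
  have hoX : Odd X := oddOf X hu1
  have hoY : Odd Y := oddOf Y hv1
  have hoZ : Odd Z := oddOf Z hw1
  have key : ∀ u v w : ZMod 8, u^2+v^2+w^2 = 3 →
      (u = v ∨ u = -v ∨ u = w ∨ u = -w ∨ v = w ∨ v = -w) := by decide
  have dvd_of : ∀ (A B : ℤ), ((A:ZMod 8)) = (B:ZMod 8) → (8:ℤ) ∣ A - B := by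
    intro A B hAB
    have : ((A - B : ℤ) : ZMod 8) = 0 := by push_cast; rw [hAB]; ring
    exact_mod_cast (ZMod.intCast_zmod_eq_zero_iff_dvd (A - B) 8).mp this
  rcases key _ _ _ hcast with hp | hp | hp | hp | hp | hp
  · exact combine _ X Y Z hoX hoZ (dvd_of X Y hp) h
  · refine combine _ X (-Y) Z hoX hoZ (dvd_of X (-Y) (by push_cast; rw [hp])) ?_
    linear_combination h
  · refine combine _ X Z Y hoX hoY (dvd_of X Z hp) ?_
    linear_combination h
  · refine combine _ X (-Z) Y hoX hoY (dvd_of X (-Z) (by push_cast; rw [hp])) ?_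
    linear_combination h
  · refine combine _ Y Z X hoY hoX (dvd_of Y Z hp) ?_
    linear_combination h
  · refine combine _ Y (-Z) X hoY hoX (dvd_of Y (-Z) (by push_cast; rw [hp])) ?_
    linear_combination h

end ThreeSq

theorem stmt4 (n : ℕ) : ∃ x y z : ℤ, (n : ℤ) = 4 * x ^ 2 + 2 * tri y + tri z :=
  ThreeSq.result n
end

section
/- For every natural number n, there exist integers x, y, z with 8n + 3 = 2(4x)² + 2(2y+1)² + (2z+1)². -/
def Q2 (A R B y z : ℤ) : ℤ := A*y^2 + 2*R*y*z + B*z^2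
def Q3 (a b c r s t x y z : ℤ) : ℤ :=
  a*x^2 + b*y^2 + c*z^2 + 2*(r*x*y + s*x*z + t*y*z)
def d3 (a b c r s t : ℤ) : ℤ := a*b*c + 2*r*s*t - a*t^2 - b*s^2 - c*r^2
def B3 (a b c r s t u1 u2 u3 v1 v2 v3 : ℤ) : ℤ :=
  a*u1*v1 + b*u2*v2 + c*u3*v3 + r*(u1*v2+u2*v1) + s*(u1*v3+u3*v1) + t*(u2*v3+u3*v2)
def det3 (p1 p2 p3 q1 q2 q3 w1 w2 w3 : ℤ) : ℤ :=
  p1*(q2*w3 - q3*w2) - q1*(p2*w3 - p3*w2) + w1*(p2*q3 - p3*q2)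

theorem Q3_split (a b c r s t x y z : ℤ) :
    a * Q3 a b c r s t x y z
      = (a*x + r*y + s*z)^2 + Q2 (a*b - r^2) (a*t - r*s) (a*c - s^2) y z := by
  simp only [Q3, Q2]; ring

theorem d2_of_d3 (a b c r s t : ℤ) :
    (a*b - r^2)*(a*c - s^2) - (a*t - r*s)^2 = a * d3 a b c r s t := by
  simp only [d3]; ring

theorem Q2_pos' (A R B : ℤ) (hA : 0 < A) (hD : 0 < A*B - R^2) :
    ∀ y z : ℤ, ¬(y = 0 ∧ z = 0) → 0 < Q2 A R B y z := by
  intro y z hyz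
  have key : A * Q2 A R B y z = (A*y+R*z)^2 + (A*B-R^2)*z^2 := by simp only [Q2]; ring
  by_cases hz : z = 0
  · subst hz
    have hy : y ≠ 0 := by tauto
    have : 0 < y^2 := by positivity
    simp only [Q2]; nlinarith
  · have : 0 < z^2 := by positivity
    nlinarith [sq_nonneg (A*y+R*z)]

theorem Q3_pos (a b c r s t : ℤ) (ha : 0 < a) (hab : 0 < a*b - r^2)
    (hd : 0 < d3 a b c r s t) :
    ∀ x y z : ℤ, ¬(x = 0 ∧ y = 0 ∧ z = 0) → 0 < Q3 a b c r s t x y z := by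
  intro x y z h
  have hD2 : 0 < (a*b - r^2)*(a*c - s^2) - (a*t - r*s)^2 := by
    rw [d2_of_d3]; positivity
  have key := Q3_split a b c r s t x y z
  by_cases hyz : y = 0 ∧ z = 0
  · obtain ⟨rfl, rfl⟩ := hyz
    have hx : x ≠ 0 := by tauto
    have : 0 < x^2 := by positivity
    simp only [Q3]; nlinarith
  · have := Q2_pos' _ _ _ hab hD2 y z hyz
    nlinarith [sq_nonneg (a*x + r*y + s*z)]

theorem Q3_min (a b c r s t : ℤ) (ha : 0 < a) (hab : 0 < a*b - r^2)
    (hd : 0 < d3 a b c r s t) :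
    ∃ (m x₀ y₀ z₀ : ℤ), Q3 a b c r s t x₀ y₀ z₀ = m ∧ 0 < m ∧
      Int.gcd (Int.gcd x₀ y₀ : ℤ) z₀ = 1 ∧
      ∀ x y z : ℤ, ¬(x = 0 ∧ y = 0 ∧ z = 0) → m ≤ Q3 a b c r s t x y z := by
  have hpos := Q3_pos a b c r s t ha hab hd
  set S : Set ℕ := {k | ∃ x y z : ℤ, ¬(x = 0 ∧ y = 0 ∧ z = 0) ∧ Q3 a b c r s t x y z = (k : ℤ)}
    with hS
  have hne : S.Nonempty := by
    refine ⟨a.toNat, 1, 0, 0, by simp, ?_⟩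
    simp only [Q3]
    rw [Int.toNat_of_nonneg ha.le]; ring
  obtain ⟨x₁, y₁, z₁, hnz, hval⟩ := Nat.sInf_mem hne
  have hle : ∀ x y z : ℤ, ¬(x = 0 ∧ y = 0 ∧ z = 0) → ((sInf S : ℕ) : ℤ) ≤ Q3 a b c r s t x y z := by
    intro x y z h
    have h0 : 0 < Q3 a b c r s t x y z := hpos x y z h
    have hmem : (Q3 a b c r s t x y z).toNat ∈ S := ⟨x, y, z, h, by rw [Int.toNat_of_nonneg h0.le]⟩
    have := Nat.sInf_le hmem
    omega
  have hmpos : 0 < ((sInf S : ℕ) : ℤ) := by rw [← hval]; exact hpos _ _ _ hnz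
  set g : ℕ := Int.gcd (Int.gcd x₁ y₁ : ℤ) z₁ with hg
  have hgne : g ≠ 0 := by
    intro h0
    rw [hg] at h0
    obtain ⟨h1a, h1b⟩ := Int.gcd_eq_zero_iff.mp h0
    have h2 : Int.gcd x₁ y₁ = 0 := by exact_mod_cast h1a
    obtain ⟨h3a, h3b⟩ := Int.gcd_eq_zero_iff.mp h2
    tauto
  obtain ⟨x₂, hx₂⟩ : (g:ℤ) ∣ x₁ := dvd_trans (Int.gcd_dvd_left (Int.gcd x₁ y₁ : ℤ) z₁) (Int.gcd_dvd_left x₁ y₁)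
  obtain ⟨y₂, hy₂⟩ : (g:ℤ) ∣ y₁ := dvd_trans (Int.gcd_dvd_left (Int.gcd x₁ y₁ : ℤ) z₁) (Int.gcd_dvd_right x₁ y₁)
  obtain ⟨z₂, hz₂⟩ : (g:ℤ) ∣ z₁ := Int.gcd_dvd_right (Int.gcd x₁ y₁ : ℤ) z₁
  have hnz₂ : ¬(x₂ = 0 ∧ y₂ = 0 ∧ z₂ = 0) := by
    rintro ⟨rfl, rfl, rfl⟩; simp at hx₂ hy₂ hz₂; tauto
  have hval₂ : Q3 a b c r s t x₁ y₁ z₁ = (g:ℤ)^2 * Q3 a b c r s t x₂ y₂ z₂ := by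
    rw [hx₂, hy₂, hz₂]; simp only [Q3]; ring
  have hg1 : g = 1 := by
    by_contra hne1
    have hg2 : 2 ≤ (g:ℤ) := by omega
    have hg4 : 4 ≤ (g:ℤ)^2 := by nlinarith
    have h1 := hle x₂ y₂ z₂ hnz₂
    have h2 : 0 < Q3 a b c r s t x₂ y₂ z₂ := hpos _ _ _ hnz₂
    nlinarith
  rw [hg1] at hx₂ hy₂ hz₂
  push_cast at hx₂ hy₂ hz₂
  rw [one_mul] at hx₂ hy₂ hz₂
  subst hx₂ hy₂ hz₂
  refine ⟨((sInf S : ℕ) : ℤ), x₁, y₁, z₁, hval, hmpos, ?_, hle⟩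
  rw [← hg, hg1]

theorem ter_complete (x y z : ℤ) (h : Int.gcd (Int.gcd x y : ℤ) z = 1) :
    ∃ q1 q2 q3 w1 w2 w3 : ℤ, det3 x y z q1 q2 q3 w1 w2 w3 = 1 := by
  by_cases hd : Int.gcd x y = 0
  · rw [Int.gcd_eq_zero_iff] at hd
    obtain ⟨rfl, rfl⟩ := hd
    have h' : Int.gcd (0:ℤ) z = 1 := by simpa using h
    have hz : z = 1 ∨ z = -1 := by
      have : z.natAbs = 1 := by simpa [Int.gcd] using h'
      omega
    refine ⟨1, 0, 0, 0, z, 0, ?_⟩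
    simp only [det3]
    rcases hz with rfl | rfl <;> ring
  · set d : ℕ := Int.gcd x y with hdd
    have hbez1 : x * Int.gcdA x y + y * Int.gcdB x y = (d:ℤ) := (Int.gcd_eq_gcd_ab x y).symm
    set A : ℤ := Int.gcdA x y
    set B : ℤ := Int.gcdB x y
    have hbez2 : (d:ℤ) * Int.gcdA (d:ℤ) z + z * Int.gcdB (d:ℤ) z = 1 := by
      have := Int.gcd_eq_gcd_ab (d:ℤ) z
      rw [h] at this; exact_mod_cast this.symm
    set e : ℤ := Int.gcdA (d:ℤ) z
    set f : ℤ := Int.gcdB (d:ℤ) z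
    obtain ⟨x₁, hx⟩ : (d:ℤ) ∣ x := Int.gcd_dvd_left x y
    obtain ⟨y₁, hy⟩ : (d:ℤ) ∣ y := Int.gcd_dvd_right x y
    have hdne : (d:ℤ) ≠ 0 := by exact_mod_cast hd
    have hxy1 : A*x₁ + B*y₁ = 1 := by
      apply mul_left_cancel₀ hdne
      rw [mul_one]
      linear_combination hbez1 - A*hx - B*hy
    refine ⟨-B, A, 0, -f*x₁, -f*y₁, e, ?_⟩
    simp only [det3]
    linear_combination e*hbez1 + z*f*hxy1 + hbez2


theorem ter_solve (p1 p2 p3 q1 q2 q3 w1 w2 w3 x y z : ℤ)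
    (h : det3 p1 p2 p3 q1 q2 q3 w1 w2 w3 = 1) :
    ∃ X Y Z : ℤ, p1*X+q1*Y+w1*Z = x ∧ p2*X+q2*Y+w2*Z = y ∧ p3*X+q3*Y+w3*Z = z := by
  refine ⟨(q2*w3-q3*w2)*x - (q1*w3-q3*w1)*y + (q1*w2-q2*w1)*z,
          -((p2*w3-p3*w2)*x) + (p1*w3-p3*w1)*y - (p1*w2-p2*w1)*z,
          (p2*q3-p3*q2)*x - (p1*q3-p3*q1)*y + (p1*q2-p2*q1)*z, ?_, ?_, ?_⟩
  · simp only [det3] at h; linear_combination x*h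
  · simp only [det3] at h; linear_combination y*h
  · simp only [det3] at h; linear_combination z*h

theorem ter_inj (p1 p2 p3 q1 q2 q3 w1 w2 w3 X Y Z : ℤ)
    (h : det3 p1 p2 p3 q1 q2 q3 w1 w2 w3 = 1)
    (h1 : p1*X+q1*Y+w1*Z = 0) (h2 : p2*X+q2*Y+w2*Z = 0) (h3 : p3*X+q3*Y+w3*Z = 0) :
    X = 0 ∧ Y = 0 ∧ Z = 0 := by
  simp only [det3] at h
  refine ⟨?_, ?_, ?_⟩
  · linear_combination (q2*w3-w2*q3)*h1 - (q1*w3-w1*q3)*h2 + (q1*w2-w1*q2)*h3 - X*h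
  · linear_combination (-(p2*w3-w2*p3))*h1 + (p1*w3-w1*p3)*h2 - (p1*w2-w1*p2)*h3 - Y*h
  · linear_combination (p2*q3-q2*p3)*h1 - (p1*q3-q1*p3)*h2 + (p1*q2-q1*p2)*h3 - Z*h
theorem ter_val_transform (a b c r s t p1 p2 p3 q1 q2 q3 w1 w2 w3 X Y Z : ℤ) :
    Q3 (Q3 a b c r s t p1 p2 p3) (Q3 a b c r s t q1 q2 q3) (Q3 a b c r s t w1 w2 w3)
       (B3 a b c r s t p1 p2 p3 q1 q2 q3) (B3 a b c r s t p1 p2 p3 w1 w2 w3)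
       (B3 a b c r s t q1 q2 q3 w1 w2 w3) X Y Z
    = Q3 a b c r s t (p1*X+q1*Y+w1*Z) (p2*X+q2*Y+w2*Z) (p3*X+q3*Y+w3*Z) := by
  simp only [Q3, B3]; ring

theorem ter_det_transform (a b c r s t p1 p2 p3 q1 q2 q3 w1 w2 w3 : ℤ) :
    d3 (Q3 a b c r s t p1 p2 p3) (Q3 a b c r s t q1 q2 q3) (Q3 a b c r s t w1 w2 w3)
       (B3 a b c r s t p1 p2 p3 q1 q2 q3) (B3 a b c r s t p1 p2 p3 w1 w2 w3)
       (B3 a b c r s t q1 q2 q3 w1 w2 w3)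
    = d3 a b c r s t * (det3 p1 p2 p3 q1 q2 q3 w1 w2 w3)^2 := by
  simp only [d3, Q3, B3, det3]; ring
theorem CR (A B : ℤ) (hA : 0 < A) : ∃ k : ℤ, -A ≤ 2*(B+k*A) ∧ 2*(B+k*A) ≤ A := by
  have h2 := Int.emod_nonneg B (by omega : A ≠ 0)
  have h3 := Int.emod_lt_of_pos B hA
  by_cases h : 2*(B % A) ≤ A
  · refine ⟨-(B/A), ?_, ?_⟩ <;>
    · have e1 : B + (-(B/A))*A = B % A := by linear_combination -Int.emod_add_mul_ediv B A
      rw [e1]; omega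
  · refine ⟨-(B/A)-1, ?_, ?_⟩ <;>
    · have e1 : B + (-(B/A)-1)*A = B % A - A := by linear_combination -Int.emod_add_mul_ediv B A
      rw [e1]; omega

theorem Q2_pos (A R B : ℤ) (hA : 0 < A) (hD : 0 < A*B - R^2) :
    ∀ y z : ℤ, ¬(y = 0 ∧ z = 0) → 0 < Q2 A R B y z := by
  intro y z hyz
  have key : A * Q2 A R B y z = (A*y+R*z)^2 + (A*B-R^2)*z^2 := by simp only [Q2]; ring
  by_cases hz : z = 0
  · subst hz
    have hy : y ≠ 0 := by tauto
    have : 0 < y^2 := by positivity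
    simp only [Q2]
    nlinarith
  · have : 0 < z^2 := by positivity
    nlinarith [sq_nonneg (A*y+R*z)]

theorem Q2_min (A R B : ℤ) (hA : 0 < A) (hD : 0 < A*B - R^2) :
    ∃ (m y₀ z₀ : ℤ), Q2 A R B y₀ z₀ = m ∧ 0 < m ∧ Int.gcd y₀ z₀ = 1 ∧
      ∀ y z : ℤ, ¬(y = 0 ∧ z = 0) → m ≤ Q2 A R B y z := by
  have hpos := Q2_pos A R B hA hD
  set S : Set ℕ := {k | ∃ y z : ℤ, ¬(y = 0 ∧ z = 0) ∧ Q2 A R B y z = (k : ℤ)} with hS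
  have hne : S.Nonempty := by
    refine ⟨A.toNat, 1, 0, by simp, ?_⟩
    simp only [Q2]
    rw [Int.toNat_of_nonneg hA.le]; ring
  obtain ⟨y₁, z₁, hnz, hval⟩ := Nat.sInf_mem hne
  have hle : ∀ y z : ℤ, ¬(y = 0 ∧ z = 0) → ((sInf S : ℕ) : ℤ) ≤ Q2 A R B y z := by
    intro y z h
    have h0 : 0 < Q2 A R B y z := hpos y z h
    have hmem : (Q2 A R B y z).toNat ∈ S := ⟨y, z, h, by rw [Int.toNat_of_nonneg h0.le]⟩
    have := Nat.sInf_le hmem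
    omega
  have hmpos : 0 < ((sInf S : ℕ) : ℤ) := by rw [← hval]; exact hpos _ _ hnz
  set g : ℕ := Int.gcd y₁ z₁ with hg
  have hgne : g ≠ 0 := by
    simp only [hg, Ne, Int.gcd_eq_zero_iff]; tauto
  obtain ⟨y₂, hy₂⟩ : (g:ℤ) ∣ y₁ := Int.gcd_dvd_left y₁ z₁
  obtain ⟨z₂, hz₂⟩ : (g:ℤ) ∣ z₁ := Int.gcd_dvd_right y₁ z₁
  have hnz₂ : ¬(y₂ = 0 ∧ z₂ = 0) := by
    rintro ⟨rfl, rfl⟩; simp at hy₂ hz₂; tauto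
  have hval₂ : Q2 A R B y₁ z₁ = (g:ℤ)^2 * Q2 A R B y₂ z₂ := by
    rw [hy₂, hz₂]; simp only [Q2]; ring
  have hg1 : g = 1 := by
    by_contra hne1
    have hg2 : 2 ≤ (g:ℤ) := by omega
    have hg4 : 4 ≤ (g:ℤ)^2 := by nlinarith
    have h1 := hle y₂ z₂ hnz₂
    have h2 : 0 < Q2 A R B y₂ z₂ := hpos _ _ hnz₂
    nlinarith
  rw [hg1] at hy₂ hz₂
  push_cast at hy₂ hz₂
  rw [one_mul] at hy₂ hz₂
  subst hy₂ hz₂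
  exact ⟨((sInf S : ℕ) : ℤ), y₁, z₁, hval, hmpos, by rw [← hg, hg1], hle⟩

def B2 (A R B e f g h : ℤ) : ℤ := A*e*g + R*(e*h + f*g) + B*f*h

theorem bin_val_transform (A R B e f g h y z : ℤ) :
    Q2 (Q2 A R B e f) (B2 A R B e f g h) (Q2 A R B g h) y z
      = Q2 A R B (e*y + g*z) (f*y + h*z) := by
  simp only [Q2, B2]; ring

theorem bin_det_transform (A R B e f g h : ℤ) :
    (Q2 A R B e f) * (Q2 A R B g h) - (B2 A R B e f g h)^2
      = (A*B - R^2) * (e*h - f*g)^2 := by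
  simp only [Q2, B2]; ring

theorem bin_solve (e f g h y z : ℤ) (hdet : e*h - f*g = 1) :
    ∃ Y Z : ℤ, e*Y + g*Z = y ∧ f*Y + h*Z = z :=
  ⟨h*y - g*z, -(f*y) + e*z, by linear_combination y*hdet, by linear_combination z*hdet⟩

/-- Full binary reduction: minimum, reduced shape, Hermite bound, value transfer. -/
theorem bin_reduce (A R B : ℤ) (hA : 0 < A) (hD : 0 < A*B - R^2) :
    ∃ m r' b' : ℤ, 0 < m ∧ -m ≤ 2*r' ∧ 2*r' ≤ m ∧ m ≤ b' ∧
      m*b' - r'^2 = A*B - R^2 ∧ 3*m^2 ≤ 4*(A*B - R^2) ∧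
      (∀ y z : ℤ, ¬(y = 0 ∧ z = 0) → m ≤ Q2 A R B y z) ∧
      (∃ y z : ℤ, Int.gcd y z = 1 ∧ Q2 A R B y z = m) ∧
      (∀ k : ℤ, (∃ y z : ℤ, Q2 A R B y z = k) → ∃ y z : ℤ, Q2 m r' b' y z = k) := by
  obtain ⟨m, y₀, z₀, hvm, hm, hgcd, hmin⟩ := Q2_min A R B hA hD
  -- Bezout completion: second column (u,v) with y₀*v - z₀*u = 1
  have hbez : y₀ * Int.gcdA y₀ z₀ + z₀ * Int.gcdB y₀ z₀ = 1 := by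
    have := Int.gcd_eq_gcd_ab y₀ z₀
    rw [hgcd] at this; exact_mod_cast this.symm
  set u : ℤ := -Int.gcdB y₀ z₀ with hu
  set v : ℤ := Int.gcdA y₀ z₀ with hv
  have hdet : y₀*v - z₀*u = 1 := by rw [hu, hv]; linear_combination hbez
  -- shift second column to center r'
  obtain ⟨k, hk1, hk2⟩ := CR m (B2 A R B y₀ z₀ u v) hm
  set u' : ℤ := u + k*y₀ with hu'
  set v' : ℤ := v + k*z₀ with hv'
  have hdet' : y₀*v' - z₀*u' = 1 := by rw [hu', hv']; linear_combination hdet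
  set r' : ℤ := B2 A R B y₀ z₀ u' v' with hr'
  set b' : ℤ := Q2 A R B u' v' with hb'
  have hrk : r' = B2 A R B y₀ z₀ u v + k*m := by
    rw [hr', hu', hv', ← hvm]; simp only [B2, Q2]; ring
  have hr1 : -m ≤ 2*r' := by rw [hrk]; linarith [hk1]
  have hr2 : 2*r' ≤ m := by rw [hrk]; linarith [hk2]
  have hnz' : ¬(u' = 0 ∧ v' = 0) := by
    rintro ⟨h1, h2⟩; rw [h1, h2] at hdet'; simp at hdet'
  have hbb : m ≤ b' := hmin u' v' hnz'
  have hdetQ : m*b' - r'^2 = A*B - R^2 := by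
    rw [← hvm, hb', hr']
    have := bin_det_transform A R B y₀ z₀ u' v'
    rw [hdet'] at this; simpa using this
  have hherm : 3*m^2 ≤ 4*(A*B - R^2) := by nlinarith
  refine ⟨m, r', b', hm, hr1, hr2, hbb, hdetQ, hherm, hmin, ⟨y₀, z₀, hgcd, hvm⟩, ?_⟩
  intro n ⟨y, z, hyz⟩
  obtain ⟨Y, Z, hY, hZ⟩ := bin_solve y₀ z₀ u' v' y z (by linarith [hdet'])
  refine ⟨Y, Z, ?_⟩
  rw [← hvm, hr', hb', bin_val_transform, hY, hZ, hyz]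

theorem sq_mod4 (x : ℤ) : x^2 % 4 = 0 ∨ x^2 % 4 = 1 := by
  have h := Int.emod_emod_of_dvd x (by norm_num : (2:ℤ) ∣ 4)
  rcases Int.even_or_odd x with ⟨k, hk⟩ | ⟨k, hk⟩ <;> subst hk
  · left; have : (k+k)^2 = 4*k^2 := by ring
    omega
  · right; have : (2*k+1)^2 = 4*(k^2+k)+1 := by ring
    omega

theorem bin_classify (A R B : ℤ) (hA : 0 < A) (h4 : A*B - R^2 = 4) (k : ℤ)
    (hk : ∃ y z : ℤ, Q2 A R B y z = k) :
    (∃ y z : ℤ, k = y^2 + 4*z^2) ∨ (∃ y z : ℤ, k = 2*y^2 + 2*z^2) := by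
  obtain ⟨m, r', b', hm, hr1, hr2, hbb, hdet, hherm, -, -, htrans⟩ :=
    bin_reduce A R B hA (by rw [h4]; norm_num)
  rw [h4] at hdet hherm
  obtain ⟨y, z, hyz⟩ := htrans k hk
  have hmle : m ≤ 2 := by nlinarith
  have hm2 : m = 1 ∨ m = 2 := by omega
  rcases hm2 with rfl | rfl
  · have hr0 : r' = 0 := by omega
    rw [hr0] at hdet
    have hb4 : b' = 4 := by linarith [hdet]
    left; exact ⟨y, z, by rw [← hyz, hr0, hb4]; simp [Q2]⟩
  · have hr0 : r' = 0 := by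
      have h3 : r' = -1 ∨ r' = 0 ∨ r' = 1 := by omega
      rcases h3 with rfl | rfl | rfl
      · norm_num at hdet; omega
      · rfl
      · norm_num at hdet; omega
    rw [hr0] at hdet
    have hb2 : b' = 2 := by linarith [hdet]
    right; exact ⟨y, z, by rw [← hyz, hr0, hb2]; simp [Q2]⟩

theorem ter_equiv_rep (a b c r s t p1 p2 p3 q1 q2 q3 w1 w2 w3 : ℤ)
    (hdet : det3 p1 p2 p3 q1 q2 q3 w1 w2 w3 = 1) (k : ℤ) :
    (∃ x y z : ℤ, ¬(x=0∧y=0∧z=0) ∧ Q3 a b c r s t x y z = k) ↔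
    (∃ X Y Z : ℤ, ¬(X=0∧Y=0∧Z=0) ∧
      Q3 (Q3 a b c r s t p1 p2 p3) (Q3 a b c r s t q1 q2 q3) (Q3 a b c r s t w1 w2 w3)
         (B3 a b c r s t p1 p2 p3 q1 q2 q3) (B3 a b c r s t p1 p2 p3 w1 w2 w3)
         (B3 a b c r s t q1 q2 q3 w1 w2 w3) X Y Z = k) := by
  constructor
  · rintro ⟨x, y, z, hnz, hval⟩
    obtain ⟨X, Y, Z, h1, h2, h3⟩ := ter_solve p1 p2 p3 q1 q2 q3 w1 w2 w3 x y z hdet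
    refine ⟨X, Y, Z, ?_, ?_⟩
    · rintro ⟨rfl, rfl, rfl⟩
      simp only [mul_zero, add_zero, zero_add] at h1 h2 h3
      exact hnz ⟨h1.symm, h2.symm, h3.symm⟩
    · rw [ter_val_transform, h1, h2, h3, hval]
  · rintro ⟨X, Y, Z, hnz, hval⟩
    refine ⟨p1*X+q1*Y+w1*Z, p2*X+q2*Y+w2*Z, p3*X+q3*Y+w3*Z, ?_, ?_⟩
    · rintro ⟨h1, h2, h3⟩
      exact hnz (ter_inj p1 p2 p3 q1 q2 q3 w1 w2 w3 X Y Z hdet h1 h2 h3)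
    · rw [← ter_val_transform, hval]

theorem even_of_three_mul (C K : ℤ) (h : 3*C = 4 + 2*K) : ∃ C', C = 2*C' := ⟨C - (K + 2 - C), by omega⟩

theorem mod4_contra (n u v w : ℤ) (hn : n % 4 = 3) (h : n - u = v + 4*w)
    (hu : u % 4 = 0 ∨ u % 4 = 1) (hv : v % 4 = 0 ∨ v % 4 = 1) : False := by omega

/-- Key case analysis: a reduced positive form of determinant 4 whose minimum is its
first diagonal coefficient, representing `n ≡ 3 mod 4`. -/
theorem reduced_case (a b c r s t n : ℤ)
    (hμpos : 0 < a) (hd : d3 a b c r s t = 4)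
    (hmin : ∀ x y z : ℤ, ¬(x=0∧y=0∧z=0) → a ≤ Q3 a b c r s t x y z)
    (hrep : ∃ x y z : ℤ, ¬(x=0∧y=0∧z=0) ∧ Q3 a b c r s t x y z = n)
    (hn4 : n % 4 = 3) :
    ∃ x y z : ℤ, n = x^2 + 2*y^2 + 2*z^2 := by
  have hsplit := Q3_split a b c r s t
  -- lower bound for the projected binary form
  have hQ'lb : ∀ y z : ℤ, ¬(y=0∧z=0) →
      3*a^2 ≤ 4 * Q2 (a*b-r^2) (a*t-r*s) (a*c-s^2) y z := by
    intro y z hyz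
    obtain ⟨x, hx1, hx2⟩ := CR a (r*y + s*z) hμpos
    have hq := hmin x y z (by tauto)
    have hs := hsplit x y z
    have hW : (a*x + r*y + s*z) = (r*y+s*z) + x*a := by ring
    have hsq : 4*(a*x + r*y + s*z)^2 ≤ a^2 := by
      nlinarith [mul_nonneg (by linarith : (0:ℤ) ≤ a - 2*((r*y+s*z)+x*a))
        (by linarith : (0:ℤ) ≤ a + 2*((r*y+s*z)+x*a))]
    nlinarith [mul_le_mul_of_nonneg_left hq hμpos.le]
  have hA' : 0 < a*b - r^2 := by
    have h1 := hQ'lb 1 0 (by simp)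
    have h2 : Q2 (a*b-r^2) (a*t-r*s) (a*c-s^2) 1 0 = a*b - r^2 := by simp [Q2]
    nlinarith
  have hdet' : (a*b-r^2)*(a*c-s^2) - (a*t-r*s)^2 = 4*a := by
    rw [d2_of_d3, hd]; ring
  obtain ⟨m', r'', b'', hm'pos, hrr1, hrr2, hbb', hdetm', hherm, hminQ',
      ⟨y₀, z₀, hprim0, hval0⟩, -⟩ :=
    bin_reduce (a*b-r^2) (a*t-r*s) (a*c-s^2) hA' (by rw [hdet']; positivity)
  rw [hdet'] at hherm
  have hnz0 : ¬(y₀ = 0 ∧ z₀ = 0) := by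
    rintro ⟨rfl, rfl⟩; simp [Int.gcd] at hprim0
  have hm'lb : 3*a^2 ≤ 4*m' := by rw [← hval0]; exact hQ'lb y₀ z₀ hnz0
  have hμle2 : a ≤ 2 := by
    by_contra hgt
    push_neg at hgt
    have haa : 3 ≤ a := by omega
    have hp1 : 9*a^4 ≤ 16*m'^2 := by
      nlinarith [mul_le_mul hm'lb hm'lb (by positivity : (0:ℤ) ≤ 3*a^2)
        (by linarith : (0:ℤ) ≤ 4*m')]
    have hp2 : 27*a^4 ≤ 256*a := by nlinarith
    have hc : 27 ≤ a^3 := by nlinarith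
    nlinarith [mul_le_mul_of_nonneg_right hc (by positivity : (0:ℤ) ≤ 27*a)]
  have hμ12 : a = 1 ∨ a = 2 := by omega
  rcases hμ12 with rfl | rfl
  · -- minimum 1 : split off a unit square
    obtain ⟨X, Y, Z, hnz, hvXYZ⟩ := hrep
    have hsp := hsplit X Y Z
    rw [hvXYZ, one_mul] at hsp
    by_cases hYZ : Y = 0 ∧ Z = 0
    · exfalso
      obtain ⟨rfl, rfl⟩ := hYZ
      have h0 : Q2 (1*b-r^2) (1*t-r*s) (1*c-s^2) 0 0 = 0 := by simp [Q2]
      rw [h0] at hsp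
      rcases sq_mod4 (1*X + r*0 + s*0) with h1 | h1 <;> omega
    · have hk : ∃ y z : ℤ, Q2 (1*b-r^2) (1*t-r*s) (1*c-s^2) y z
          = n - (1*X+r*Y+s*Z)^2 := ⟨Y, Z, by linarith⟩
      rcases bin_classify _ _ _ hA' (by rw [hdet']; ring) _ hk with ⟨y, z, hyz⟩ | ⟨y, z, hyz⟩
      · exact absurd hn4 (fun _ => mod4_contra n ((1*X+r*Y+s*Z)^2) (y^2) (z^2) hn4
          (by linarith) (sq_mod4 _) (sq_mod4 _))
      · exact ⟨1*X+r*Y+s*Z, y, z, by linarith⟩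
  · -- minimum 2 : the form must be even, contradiction
    exfalso
    have hm3 : m' = 3 := by nlinarith
    obtain ⟨x₀, hx1, hx2⟩ := CR 2 (r*y₀ + s*z₀) (by norm_num)
    have hq0 := hmin x₀ y₀ z₀ (by tauto)
    have hs0 := hsplit x₀ y₀ z₀
    rw [hval0, hm3] at hs0
    -- W = 2x₀ + r y₀ + s z₀ satisfies W² = 2q - 3, |W| ≤ 1
    have hWb1 : -1 ≤ 2*x₀ + r*y₀ + s*z₀ := by linarith
    have hWb2 : 2*x₀ + r*y₀ + s*z₀ ≤ 1 := by linarith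
    have hWeq : (2*x₀ + r*y₀ + s*z₀)^2 = 2 * Q3 2 b c r s t x₀ y₀ z₀ - 3 := by
      linear_combination -hs0
    have hW3 : 2*x₀ + r*y₀ + s*z₀ = -1 ∨ 2*x₀ + r*y₀ + s*z₀ = 0 ∨
        2*x₀ + r*y₀ + s*z₀ = 1 := by omega
    have hWpm : (2*x₀ + r*y₀ + s*z₀ = 1 ∨ 2*x₀ + r*y₀ + s*z₀ = -1)
        ∧ Q3 2 b c r s t x₀ y₀ z₀ = 2 := by
      rcases hW3 with h | h | h <;> rw [h] at hWeq <;> norm_num at hWeq <;>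
        first
          | (exact ⟨Or.inr h, by linarith⟩)
          | (exact ⟨Or.inl h, by linarith⟩)
          | omega
    obtain ⟨hW, hq2⟩ := hWpm
    obtain ⟨ε, hε, hεW⟩ : ∃ ε : ℤ, (ε = 1 ∨ ε = -1) ∧
        ε * (2*x₀ + r*y₀ + s*z₀) = 1 := by
      rcases hW with h | h
      · exact ⟨1, Or.inl rfl, by rw [h]; ring⟩
      · exact ⟨-1, Or.inr rfl, by rw [h]; ring⟩
    have hε2 : ε^2 = 1 := by rcases hε with rfl | rfl <;> norm_num
    have hprimε : Int.gcd (ε*y₀) (ε*z₀) = 1 := by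
      rcases hε with rfl | rfl
      · simpa using hprim0
      · rw [show (-1:ℤ)*y₀ = -y₀ by ring, show (-1:ℤ)*z₀ = -z₀ by ring,
          Int.neg_gcd, Int.gcd_neg]
        exact hprim0
    have hbez : (ε*y₀) * Int.gcdA (ε*y₀) (ε*z₀) + (ε*z₀) * Int.gcdB (ε*y₀) (ε*z₀) = 1 := by
      have := Int.gcd_eq_gcd_ab (ε*y₀) (ε*z₀)
      rw [hprimε] at this; exact_mod_cast this.symm
    set gA := Int.gcdA (ε*y₀) (ε*z₀) with hgA
    set gB := Int.gcdB (ε*y₀) (ε*z₀) with hgB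
    have hdetM2 : det3 1 0 0 (ε*x₀) (ε*y₀) (ε*z₀) 0 (-gB) gA = 1 := by
      simp only [det3]; linear_combination hbez
    obtain ⟨X, Y, Z, hnz2, hv2⟩ :=
      (ter_equiv_rep 2 b c r s t 1 0 0 (ε*x₀) (ε*y₀) (ε*z₀) 0 (-gB) gA hdetM2 n).mp hrep
    have hd2 := ter_det_transform 2 b c r s t 1 0 0 (ε*x₀) (ε*y₀) (ε*z₀) 0 (-gB) gA
    rw [hdetM2, hd] at hd2
    -- compute the first entries
    have hA2 : Q3 2 b c r s t 1 0 0 = 2 := by simp [Q3]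
    have hB2 : Q3 2 b c r s t (ε*x₀) (ε*y₀) (ε*z₀) = 2 := by
      have : Q3 2 b c r s t (ε*x₀) (ε*y₀) (ε*z₀) = ε^2 * Q3 2 b c r s t x₀ y₀ z₀ := by
        simp only [Q3]; ring
      rw [this, hε2, hq2]; ring
    have hR2 : B3 2 b c r s t 1 0 0 (ε*x₀) (ε*y₀) (ε*z₀) = 1 := by
      have : B3 2 b c r s t 1 0 0 (ε*x₀) (ε*y₀) (ε*z₀)
          = ε * (2*x₀ + r*y₀ + s*z₀) := by simp only [B3]; ring
      rw [this, hεW]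
    rw [hA2, hB2, hR2] at hv2 hd2
    set S2 := B3 2 b c r s t 1 0 0 0 (-gB) gA with hS2
    set T2 := B3 2 b c r s t (ε*x₀) (ε*y₀) (ε*z₀) 0 (-gB) gA with hT2
    set C2 := Q3 2 b c r s t 0 (-gB) gA with hC2
    simp only [d3] at hd2
    simp only [Q3] at hv2
    have hK : 3*C2 = 4 + 2*(S2^2 + T2^2 - S2*T2) := by linear_combination hd2
    obtain ⟨C', hC'⟩ := even_of_three_mul C2 _ hK
    rw [hC'] at hv2
    have hneven : n = 2*(X^2 + Y^2 + C'*Z^2 + X*Y + S2*X*Z + T2*Y*Z) := by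
      linear_combination -hv2
    omega

theorem ternary_represents (a b c r s t n : ℤ) (ha : 0 < a) (hab : 0 < a*b - r^2)
    (hd : d3 a b c r s t = 4) (hn4 : n % 4 = 3)
    (hrep : ∃ x y z : ℤ, Q3 a b c r s t x y z = n) :
    ∃ x y z : ℤ, n = x^2 + 2*y^2 + 2*z^2 := by
  have hd0 : 0 < d3 a b c r s t := by rw [hd]; norm_num
  have hpos := Q3_pos a b c r s t ha hab hd0
  have hrepnz : ∃ x y z : ℤ, ¬(x=0∧y=0∧z=0) ∧ Q3 a b c r s t x y z = n := by
    obtain ⟨x, y, z, hv⟩ := hrep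
    refine ⟨x, y, z, ?_, hv⟩
    rintro ⟨rfl, rfl, rfl⟩
    simp only [Q3] at hv
    omega
  obtain ⟨μ, v1, v2, v3, hμval, hμpos, hprim, hμmin⟩ := Q3_min a b c r s t ha hab hd0
  obtain ⟨q1, q2, q3, w1, w2, w3, hdetM⟩ := ter_complete v1 v2 v3 hprim
  have hd1 := ter_det_transform a b c r s t v1 v2 v3 q1 q2 q3 w1 w2 w3
  rw [hdetM, hd] at hd1
  norm_num at hd1
  have hrep1 := (ter_equiv_rep a b c r s t v1 v2 v3 q1 q2 q3 w1 w2 w3 hdetM n).mp hrepnz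
  have hmin1 : ∀ X Y Z : ℤ, ¬(X=0∧Y=0∧Z=0) →
      μ ≤ Q3 (Q3 a b c r s t v1 v2 v3) (Q3 a b c r s t q1 q2 q3) (Q3 a b c r s t w1 w2 w3)
         (B3 a b c r s t v1 v2 v3 q1 q2 q3) (B3 a b c r s t v1 v2 v3 w1 w2 w3)
         (B3 a b c r s t q1 q2 q3 w1 w2 w3) X Y Z := by
    intro X Y Z hnz
    obtain ⟨x, y, z, hnz', hval'⟩ :=
      (ter_equiv_rep a b c r s t v1 v2 v3 q1 q2 q3 w1 w2 w3 hdetM _).mpr ⟨X, Y, Z, hnz, rfl⟩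
    rw [← hval']
    exact hμmin x y z hnz'
  rw [hμval] at hmin1 hrep1 hd1
  exact reduced_case μ (Q3 a b c r s t q1 q2 q3) (Q3 a b c r s t w1 w2 w3)
    (B3 a b c r s t v1 v2 v3 q1 q2 q3) (B3 a b c r s t v1 v2 v3 w1 w2 w3)
    (B3 a b c r s t q1 q2 q3 w1 w2 w3) n hμpos hd1 hmin1 hrep1 hn4

theorem odd_sq_8 (a : ℤ) (ha : a % 2 = 1) : ∃ j : ℤ, a^2 = 8*j + 1 := by
  obtain ⟨k, hk⟩ : ∃ k : ℤ, a = 2*k+1 := ⟨(a-1)/2, by omega⟩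
  obtain ⟨j, hj⟩ : Even (k^2 + k) := by
    have : k^2 + k = k*(k+1) := by ring
    rw [this]; exact Int.even_mul_succ_self k
  exact ⟨j, by rw [hk]; linear_combination 4*hj⟩

theorem even_sq_4 (a : ℤ) (ha : a % 2 = 0) : ∃ j : ℤ, a^2 = 4*j := by
  obtain ⟨k, hk⟩ : ∃ k : ℤ, a = 2*k := ⟨a/2, by omega⟩
  exact ⟨k^2, by rw [hk]; ring⟩

theorem pairup (N γ α β : ℤ) (hγ : γ % 2 = 1) (hα : α % 2 = 1)
    (hs : (α+β) % 8 = 0 ∨ (α-β) % 8 = 0) (hN : N = γ^2 + α^2 + β^2) :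
    ∃ x y z : ℤ, N = 2*(4*x)^2 + 2*(2*y+1)^2 + (2*z+1)^2 := by
  obtain ⟨k, hβ⟩ : ∃ k : ℤ, β = α - 8*k ∨ β = 8*k - α := by
    rcases hs with h | h
    · exact ⟨(α+β)/8, Or.inr (by omega)⟩
    · exact ⟨(α-β)/8, Or.inl (by omega)⟩
  obtain ⟨z, hz⟩ : ∃ z : ℤ, γ = 2*z+1 := ⟨(γ-1)/2, by omega⟩
  obtain ⟨y, hy⟩ : ∃ y : ℤ, α = 2*y+1+4*k := ⟨(α-1-4*k)/2, by omega⟩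
  refine ⟨k, y, z, ?_⟩
  rcases hβ with hβ | hβ <;> rw [hN, hβ, hz, hy] <;> ring

theorem conv2 (N A B C : ℤ) (h8 : N % 8 = 3) (h : N = A^2 + 2*B^2 + 2*C^2)
    (hA : A % 2 = 1) (hB : B % 2 = 0) (hC : C % 2 = 1) :
    ∃ x y z : ℤ, N = 2*(4*x)^2 + 2*(2*y+1)^2 + (2*z+1)^2 := by
  set U := B + C with hU
  set V := B - C with hV
  have hUo : U % 2 = 1 := by omega
  have hVo : V % 2 = 1 := by omega
  have hNsum : N = A^2 + U^2 + V^2 := by rw [hU, hV]; linear_combination h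
  have hcases : (A+U) % 8 = 0 ∨ (A-U) % 8 = 0 ∨ (A+V) % 8 = 0 ∨ (A-V) % 8 = 0 ∨
      (U+V) % 8 = 0 ∨ (U-V) % 8 = 0 := by omega
  rcases hcases with hc | hc | hc | hc | hc | hc
  · exact pairup N V A U hVo hA (Or.inl hc) (by linear_combination hNsum)
  · exact pairup N V A U hVo hA (Or.inr hc) (by linear_combination hNsum)
  · exact pairup N U A V hUo hA (Or.inl hc) (by linear_combination hNsum)
  · exact pairup N U A V hUo hA (Or.inr hc) (by linear_combination hNsum)
  · exact pairup N A U V hA hUo (Or.inl hc) (by linear_combination hNsum)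
  · exact pairup N A U V hA hUo (Or.inr hc) (by linear_combination hNsum)

theorem convert_rep (N A B C : ℤ) (h8 : N % 8 = 3) (h : N = A^2 + 2*B^2 + 2*C^2) :
    ∃ x y z : ℤ, N = 2*(4*x)^2 + 2*(2*y+1)^2 + (2*z+1)^2 := by
  have hA : A % 2 = 1 := by
    rcases (by omega : A % 2 = 0 ∨ A % 2 = 1) with hA0 | hA1
    · exfalso
      obtain ⟨j, hj⟩ := even_sq_4 A hA0
      have h2 : N = 4*j + 2*(B^2 + C^2) := by rw [← hj]; linear_combination h
      obtain ⟨k, hk⟩ : ∃ k : ℤ, B^2 + C^2 = k := ⟨_, rfl⟩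
      rw [hk] at h2
      omega
    · exact hA1
  obtain ⟨a', ha'⟩ := odd_sq_8 A hA
  rcases (by omega : B % 2 = 0 ∨ B % 2 = 1) with hB | hB <;>
    rcases (by omega : C % 2 = 0 ∨ C % 2 = 1) with hC | hC
  · exfalso
    obtain ⟨b', hb'⟩ := even_sq_4 B hB
    obtain ⟨c', hc'⟩ := even_sq_4 C hC
    rw [ha', hb', hc'] at h
    omega
  · exact conv2 N A B C h8 h hA hB hC
  · exact conv2 N A C B h8 (by linear_combination h) hA hC hB
  · exfalso
    obtain ⟨b', hb'⟩ := odd_sq_8 B hB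
    obtain ⟨c', hc'⟩ := odd_sq_8 C hC
    rw [ha', hb', hc'] at h
    omega

theorem exists_rep (N : ℕ) (hN8 : N % 8 = 3) :
    ∃ A B C : ℤ, (N:ℤ) = A^2 + 2*B^2 + 2*C^2 := by
  have hN3 : 3 ≤ N := by omega
  have hNodd : N % 2 = 1 := by omega
  haveI : NeZero (4*N) := ⟨by omega⟩
  -- the residue N-2 is a unit mod 4N
  have hunit : IsUnit (((N-2 : ℕ) : ZMod (4*N))) := by
    rw [ZMod.isUnit_iff_coprime]
    have h2 : Nat.Coprime (N-2) 2 := Nat.coprime_two_right.mpr (Nat.odd_iff.mpr (by omega))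
    have h4 : Nat.Coprime (N-2) 4 := by
      have := h2.pow_right 2
      norm_num at this
      exact this
    have hNc : Nat.Coprime (N-2) N := by
      have hd2 : Nat.gcd (N-2) N ∣ 2 := by
        have := Nat.dvd_sub (Nat.gcd_dvd_right (N-2) N) (Nat.gcd_dvd_left (N-2) N)
        rwa [show N - (N-2) = 2 by omega] at this
      rcases (Nat.dvd_prime Nat.prime_two).mp hd2 with h | h
      · exact h
      · exfalso
        have := Nat.gcd_dvd_left (N-2) N
        rw [h] at this
        omega
    exact h4.mul_right hNc
  obtain ⟨p, hp_gt, hp_prime, hp_cast⟩ :=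
    Nat.forall_exists_prime_gt_and_eq_mod hunit (4*N)
  have hmodeq : p ≡ (N-2) [MOD 4*N] := (ZMod.natCast_eq_natCast_iff _ _ _).mp hp_cast
  have hp4 : p % 4 = 1 := by
    have h := hmodeq.of_dvd (dvd_mul_right 4 N)
    have : p % 4 = (N-2) % 4 := h
    omega
  have hpN : p % N = N - 2 := by
    have h := hmodeq.of_dvd (dvd_mul_left N 4)
    have : p % N = (N-2) % N := h
    have : (N-2) % N = N-2 := Nat.mod_eq_of_lt (by omega)
    omega
  have hp_odd : p % 2 = 1 := by omega
  haveI : Fact p.Prime := ⟨hp_prime⟩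
  -- N | 2p + 4  and  m
  have hdvd : N ∣ 2*p + 4 := by
    have h := (hmodeq.of_dvd (dvd_mul_left N 4)).mul_left 2 |>.add_right 4
    have h2N : 2*(N-2) + 4 = 2*N := by omega
    rw [h2N] at h
    have hz : (2*N) % N = 0 := by simp [Nat.mul_mod_right, Nat.mul_mod_left]
    have : (2*p+4) % N = 0 := by
      have := h  -- 2p+4 ≡ 2N [MOD N]
      unfold Nat.ModEq at this
      omega
    omega
  set m : ℕ := (2*p+4)/N with hm
  have hNm : N * m = 2*p + 4 := Nat.mul_div_cancel' hdvd
  have hm_pos : 0 < m := by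
    rcases Nat.eq_zero_or_pos m with h | h
    · rw [h] at hNm; omega
    · exact h
  have hm_even : m % 2 = 0 := by
    rcases Nat.even_or_odd m with h | h
    · exact Nat.even_iff.mp h
    · exfalso
      have hodd : Odd (N * m) := (Nat.odd_iff.mpr hNodd).mul h
      rw [hNm] at hodd
      obtain ⟨q, hq⟩ := hodd
      omega
  -- Jacobi symbol computation: J(N|p) = 1
  have hJ : jacobiSym (N : ℤ) p = 1 := by
    have hrec := jacobiSym.quadratic_reciprocity_one_mod_four' (Nat.odd_iff.mpr hNodd) hp4
    have e1 : ((p:ℤ)) % (N:ℤ) = (N:ℤ) - 2 := by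
      have : ((p % N : ℕ) : ℤ) = (p:ℤ) % (N:ℤ) := Int.natCast_mod p N
      rw [← this, hpN]
      push_cast [Nat.cast_sub (by omega : 2 ≤ N)]
      ring
    have e2 : ((-2 : ℤ)) % (N:ℤ) = (N:ℤ) - 2 := by
      have h1 : ((-2 : ℤ) + (N:ℤ)*1) % (N:ℤ) = (-2:ℤ) % (N:ℤ) := by
        rw [Int.add_mul_emod_self_left]
      rw [← h1, show (-2 : ℤ) + (N:ℤ)*1 = (N:ℤ) - 2 by ring]
      exact Int.emod_eq_of_lt (by omega) (by omega)
    have hml : jacobiSym (p : ℤ) N = jacobiSym (-2 : ℤ) N :=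
      jacobiSym.mod_left' (by rw [e1, e2])
    have hneg2 : jacobiSym (-2 : ℤ) N = 1 := by
      rw [jacobiSym.at_neg_two (Nat.odd_iff.mpr hNodd)]
      rw [ZMod.χ₈'_nat_eq_if_mod_eight]
      simp [hNodd, hN8]
    rw [hrec, hml, hneg2]
  have hsqN : IsSquare ((N : ℤ) : ZMod p) := ZMod.isSquare_of_jacobiSym_eq_one hJ
  have hNp0 : ((N : ℕ) : ZMod p) ≠ 0 := by
    rw [Ne, ZMod.natCast_eq_zero_iff]
    intro hdvd'
    have := Nat.le_of_dvd (by omega) hdvd'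
    omega
  -- construct square root of -m mod p
  obtain ⟨w, hw⟩ := hsqN
  obtain ⟨i, hi⟩ := (ZMod.exists_sq_eq_neg_one_iff (p := p)).mpr (by omega)
  have hw0 : w ≠ 0 := by
    intro h0
    rw [h0, mul_zero] at hw
    apply hNp0
    rw [show ((N:ℕ) : ZMod p) = (((N:ℕ):ℤ) : ZMod p) by push_cast; ring, hw]
  have hpK : ((p : ℕ) : ZMod p) = 0 := ZMod.natCast_self p
  have hm4 : ((N : ℕ) : ZMod p) * ((m : ℕ) : ZMod p) = 4 := by
    have := congrArg (fun k : ℕ => (k : ZMod p)) hNm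
    push_cast at this
    rw [hpK] at this
    push_cast at this ⊢
    linear_combination this
  set u : ZMod p := 2 * i * w⁻¹ with hu
  have hNK : ((N:ℕ) : ZMod p) = w * w := by
    rw [show ((N:ℕ) : ZMod p) = (((N:ℕ):ℤ) : ZMod p) by push_cast; ring, hw]
  have key : ((m:ℕ) : ZMod p) * (w*w) = 4 := by
    rw [← hNK]; linear_combination hm4
  have husq : u^2 = -(((m:ℕ) : ZMod p)) := by
    have hwne : w*w ≠ 0 := mul_ne_zero hw0 hw0
    apply mul_right_cancel₀ hwne
    have lhs : u^2*(w*w) = -4 := by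
      rw [hu, show (2*i*w⁻¹)^2*(w*w) = (2*i)^2*((w⁻¹*w)*(w⁻¹*w)) from by ring,
        inv_mul_cancel₀ hw0]
      linear_combination (-4 : ZMod p)*hi
    have rhs : (-(((m:ℕ)) : ZMod p))*(w*w) = -4 := by linear_combination -key
    rw [lhs, rhs]
  -- lift the square root to ℤ and adjust parity
  set x₁ : ℤ := (u.val : ℤ) with hx₁
  have hux : ((x₁ : ℤ) : ZMod p) = u := by
    rw [hx₁]; push_cast; exact ZMod.natCast_rightInverse u
  have hdvd1 : (p:ℤ) ∣ x₁^2 + (m:ℤ) := by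
    rw [← ZMod.intCast_zmod_eq_zero_iff_dvd]
    push_cast
    rw [hux, husq]
    ring
  have hp2Z : ((p:ℕ):ℤ) % 2 = 1 := by omega
  set x : ℤ := if x₁ % 2 = 0 then x₁ else x₁ + p with hx
  have hx_even : x % 2 = 0 := by
    rw [hx]; split_ifs with h
    · exact h
    · omega
  have hdvdx : (p:ℤ) ∣ x^2 + (m:ℤ) := by
    rw [hx]; split_ifs with h
    · exact hdvd1
    · have e : (x₁ + (p:ℤ))^2 + (m:ℤ) = (x₁^2 + (m:ℤ)) + (p:ℤ)*(2*x₁ + p) := by ring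
      rw [e]
      exact dvd_add hdvd1 ⟨2*x₁+p, rfl⟩
  have h2dvdx : (2:ℤ) ∣ x^2 + (m:ℤ) := by
    obtain ⟨xh, hxh⟩ : ∃ k:ℤ, x = 2*k := ⟨x/2, by omega⟩
    obtain ⟨mh, hmh⟩ : ∃ k:ℤ, (m:ℤ) = 2*k := ⟨(m:ℤ)/2, by omega⟩
    exact ⟨2*xh^2 + mh, by rw [hxh, hmh]; ring⟩
  have hcop : IsCoprime (2:ℤ) ((p:ℕ):ℤ) := ⟨((p:ℤ)+1)/2, -1, by omega⟩
  have hdvd2p : 2*(p:ℤ) ∣ x^2 + (m:ℤ) := hcop.mul_dvd h2dvdx hdvdx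
  obtain ⟨l, hl⟩ := hdvd2p
  have hm_posZ : 0 < (m:ℤ) := by exact_mod_cast hm_pos
  have hl_pos : 0 < l := by nlinarith [sq_nonneg x]
  have hNmZ : (N:ℤ) * (m:ℤ) = 2*(p:ℤ) + 4 := by exact_mod_cast hNm
  apply ternary_represents l (2*(p:ℤ)) (N:ℤ) (-x) 1 0
  · exact hl_pos
  · rw [show l*(2*(p:ℤ)) - (-x)^2 = (m:ℤ) from by linear_combination -hl]
    exact hm_posZ
  · simp only [d3]
    linear_combination -(N:ℤ)*hl + hNmZ
  · omega
  · exact ⟨0, 0, 1, by simp [Q3]⟩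

theorem stmt6 (n : ℕ) : ∃ x y z : ℤ,
    8 * (n : ℤ) + 3 = 2 * (4 * x) ^ 2 + 2 * (2 * y + 1) ^ 2 + (2 * z + 1) ^ 2 := by
  obtain ⟨A, B, C, h⟩ := exists_rep (8*n+3) (by omega)
  have h8 : ((8*n+3 : ℕ) : ℤ) % 8 = 3 := by push_cast; omega
  obtain ⟨x, y, z, hx⟩ := convert_rep _ A B C h8 h
  refine ⟨x, y, z, ?_⟩
  push_cast at hx
  linarith
end

section
/- For every natural number n there exist integers x, y, z with 24n + 3 = x² + y² + z². -/
namespace ThreeSq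

abbrev PD (a b c d e f : ℤ) : Prop :=
  ∀ x y z : ℤ, (x ≠ 0 ∨ y ≠ 0 ∨ z ≠ 0) →
    0 < a*x^2 + b*y^2 + c*z^2 + 2*d*x*y + 2*e*x*z + 2*f*y*z

abbrev Rep (a b c d e f : ℤ) : Prop :=
  ∃ x1 y1 z1 x2 y2 z2 x3 y3 z3 : ℤ,
    a = x1^2 + y1^2 + z1^2 ∧ b = x2^2 + y2^2 + z2^2 ∧ c = x3^2 + y3^2 + z3^2 ∧
    d = x1*x2 + y1*y2 + z1*z2 ∧ e = x1*x3 + y1*y3 + z1*z3 ∧ f = x2*x3 + y2*y3 + z2*z3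

lemma case1 (a b c d e f : ℤ) (hd0 : 0 ≤ d) (he0 : 0 ≤ e) (hf0 : 0 ≤ f)
    (hda : 2*d ≤ a) (hdb : 2*d ≤ b) (hea : 2*e ≤ a) (hec : 2*e ≤ c)
    (hfb : 2*f ≤ b) (hfc : 2*f ≤ c) :
    2*a*f^2 + 2*b*e^2 + 2*c*d^2 ≤ a*b*c + 4*d*e*f := by
  nlinarith [mul_nonneg (mul_nonneg (by linarith : (0:ℤ) ≤ a - 2*d) hd0) he0,
    mul_nonneg (mul_nonneg (by linarith : (0:ℤ) ≤ a - 2*d) (by linarith : (0:ℤ) ≤ c - 2*e)) hd0,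
    mul_nonneg (mul_nonneg (by linarith : (0:ℤ) ≤ b - 2*d) (by linarith : (0:ℤ) ≤ c - 2*f)) hd0,
    mul_nonneg (mul_nonneg (by linarith : (0:ℤ) ≤ c - 2*e) hd0) he0,
    mul_nonneg (mul_nonneg (by linarith : (0:ℤ) ≤ a - 2*d) (by linarith : (0:ℤ) ≤ b - 2*d)) (by linarith : (0:ℤ) ≤ c - 2*f),
    mul_nonneg (mul_nonneg (by linarith : (0:ℤ) ≤ b - 2*f) hd0) hf0,
    mul_nonneg (mul_nonneg (by linarith : (0:ℤ) ≤ a - 2*d) (by linarith : (0:ℤ) ≤ b - 2*d)) (by linarith : (0:ℤ) ≤ c - 2*e),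
    mul_nonneg (mul_nonneg (by linarith : (0:ℤ) ≤ a - 2*d) (by linarith : (0:ℤ) ≤ b - 2*f)) hf0,
    mul_nonneg (mul_nonneg (by linarith : (0:ℤ) ≤ b - 2*d) (by linarith : (0:ℤ) ≤ a - 2*e)) he0,
    mul_nonneg (mul_nonneg (by linarith : (0:ℤ) ≤ b - 2*d) (by linarith : (0:ℤ) ≤ c - 2*e)) hd0,
    mul_nonneg (mul_nonneg (by linarith : (0:ℤ) ≤ a - 2*e) (by linarith : (0:ℤ) ≤ c - 2*f)) hd0]

lemma case2 (a b c d e g : ℤ) (hd0 : 0 ≤ d) (he0 : 0 ≤ e) (hg0 : 0 ≤ g)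
    (hda : 2*d ≤ a) (hdb : 2*d ≤ b) (hea : 2*e ≤ a) (hec : 2*e ≤ c)
    (hgb : 2*g ≤ b) (hgc : 2*g ≤ c)
    (s1 : 2*(d+e+g) ≤ a+b) (s2 : 2*(d+e+g) ≤ a+c) (s3 : 2*(d+e+g) ≤ b+c) :
    4*d*e*g + 2*a*g^2 + 2*b*e^2 + 2*c*d^2 ≤ a*b*c := by
  nlinarith [mul_nonneg (mul_nonneg (by linarith : (0:ℤ) ≤ a - 2*e) hg0) (by linarith : (0:ℤ) ≤ b + c - 2*(d+e+g)),
    mul_nonneg (mul_nonneg hd0 he0) (by linarith : (0:ℤ) ≤ a + c - 2*(d+e+g)),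
    mul_nonneg (mul_nonneg (by linarith : (0:ℤ) ≤ b - 2*g) he0) hg0,
    mul_nonneg (mul_nonneg (by linarith : (0:ℤ) ≤ b - 2*d) he0) (by linarith : (0:ℤ) ≤ a + c - 2*(d+e+g)),
    mul_nonneg (mul_nonneg (by linarith : (0:ℤ) ≤ a - 2*e) (by linarith : (0:ℤ) ≤ c - 2*e)) (by linarith : (0:ℤ) ≤ b - 2*g),
    mul_nonneg (mul_nonneg (by linarith : (0:ℤ) ≤ b - 2*d) (by linarith : (0:ℤ) ≤ a - 2*e)) (by linarith : (0:ℤ) ≤ c - 2*g),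
    mul_nonneg (mul_nonneg hd0 he0) (by linarith : (0:ℤ) ≤ a + b - 2*(d+e+g)),
    mul_nonneg (mul_nonneg (by linarith : (0:ℤ) ≤ a - 2*d) (by linarith : (0:ℤ) ≤ c - 2*e)) hd0,
    mul_nonneg (mul_nonneg (by linarith : (0:ℤ) ≤ b - 2*d) (by linarith : (0:ℤ) ≤ c - 2*e)) he0]

lemma keyIneq (a b c d e f : ℤ)
    (hd1 : 0 ≤ a + 2*d) (hd2 : 0 ≤ a - 2*d) (hd3 : 0 ≤ b + 2*d) (hd4 : 0 ≤ b - 2*d)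
    (he1 : 0 ≤ a + 2*e) (he2 : 0 ≤ a - 2*e) (he3 : 0 ≤ c + 2*e) (he4 : 0 ≤ c - 2*e)
    (hf1 : 0 ≤ b + 2*f) (hf2 : 0 ≤ b - 2*f) (hf3 : 0 ≤ c + 2*f) (hf4 : 0 ≤ c - 2*f)
    (t1 : 0 ≤ a + b + 2*e + 2*f + 2*d) (t2 : 0 ≤ a + b + 2*e - 2*f - 2*d)
    (t3 : 0 ≤ a + b - 2*e + 2*f - 2*d) (t4 : 0 ≤ a + b - 2*e - 2*f + 2*d)
    (u1 : 0 ≤ a + c + 2*d + 2*f + 2*e) (u2 : 0 ≤ a + c + 2*d - 2*f - 2*e)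
    (u3 : 0 ≤ a + c - 2*d + 2*f - 2*e) (u4 : 0 ≤ a + c - 2*d - 2*f + 2*e)
    (v1 : 0 ≤ b + c + 2*d + 2*e + 2*f) (v2 : 0 ≤ b + c + 2*d - 2*e - 2*f)
    (v3 : 0 ≤ b + c - 2*d + 2*e - 2*f) (v4 : 0 ≤ b + c - 2*d - 2*e + 2*f) :
    a*b*c ≤ 2*(a*b*c + 2*d*e*f - a*f^2 - b*e^2 - c*d^2) := by
  rcases le_or_gt 0 d with hd | hd <;> rcases le_or_gt 0 e with he | he <;>
    rcases le_or_gt 0 f with hf | hf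
  · have := case1 a b c d e f hd he hf (by linarith) (by linarith) (by linarith)
      (by linarith) (by linarith) (by linarith)
    linarith [this]
  · -- d ≥ 0, e ≥ 0, f < 0 : case2 with (d, e, -f)
    have := case2 a b c d e (-f) hd he (by linarith) (by linarith) (by linarith)
      (by linarith) (by linarith) (by linarith) (by linarith)
      (by linarith) (by linarith) (by linarith)
    linarith [this]
  · -- d ≥ 0, e < 0, f ≥ 0 : case2 with (d, -e, f)
    have := case2 a b c d (-e) f hd (by linarith) hf (by linarith) (by linarith)
      (by linarith) (by linarith) (by linarith) (by linarith)
      (by linarith) (by linarith) (by linarith)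
    linarith [this]
  · -- d ≥ 0, e < 0, f < 0 : case1 with (d, -e, -f)
    have := case1 a b c d (-e) (-f) hd (by linarith) (by linarith) (by linarith)
      (by linarith) (by linarith) (by linarith) (by linarith) (by linarith)
    linarith [this]
  · -- d < 0, e ≥ 0, f ≥ 0 : case2 with (-d, e, f)
    have := case2 a b c (-d) e f (by linarith) he hf (by linarith) (by linarith)
      (by linarith) (by linarith) (by linarith) (by linarith)
      (by linarith) (by linarith) (by linarith)
    linarith [this]
  · -- d < 0, e ≥ 0, f < 0 : case1 with (-d, e, -f)
    have := case1 a b c (-d) e (-f) (by linarith) he (by linarith) (by linarith)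
      (by linarith) (by linarith) (by linarith) (by linarith) (by linarith)
    linarith [this]
  · -- d < 0, e < 0, f ≥ 0 : case1 with (-d, -e, f)
    have := case1 a b c (-d) (-e) f (by linarith) (by linarith) hf (by linarith)
      (by linarith) (by linarith) (by linarith) (by linarith) (by linarith)
    linarith [this]
  · -- d < 0, e < 0, f < 0 : case2 with (-d, -e, -f)
    have := case2 a b c (-d) (-e) (-f) (by linarith) (by linarith) (by linarith)
      (by linarith) (by linarith) (by linarith) (by linarith)
      (by linarith) (by linarith) (by linarith) (by linarith) (by linarith)
    linarith [this]


lemma rep12 (a b c d e f t : ℤ)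
    (h : Rep a (b + t^2*a + 2*t*d) (c) (d + t*a) (e) (f + t*e)) :
    Rep a b c d e f := by
  obtain ⟨x1, y1, z1, x2, y2, z2, x3, y3, z3, h1, h2, h3, h4, h5, h6⟩ := h
  exact ⟨x1, y1, z1, x2 - t*x1, y2 - t*y1, z2 - t*z1, x3, y3, z3, by linear_combination h1, by linear_combination h2 - 2*t*h4 + t^2*h1, by linear_combination h3, by linear_combination h4 - t*h1, by linear_combination h5, by linear_combination h6 - t*h5⟩


lemma pd12 (a b c d e f t : ℤ) (h : PD a b c d e f) :
    PD (a) (b + t^2*a + 2*t*d) (c) (d + t*a) (e) (f + t*e) := by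
  intro x y z hxyz
  have key : (a)*x^2 + (b + t^2*a + 2*t*d)*y^2 + (c)*z^2 + 2*(d + t*a)*x*y + 2*(e)*x*z + 2*(f + t*e)*y*z = a*(x + t*y)^2 + b*(y)^2 + c*(z)^2 + 2*d*(x + t*y)*(y) + 2*e*(x + t*y)*(z) + 2*f*(y)*(z) := by ring
  rw [key]
  refine h (x + t*y) (y) (z) ?_
  rcases hxyz with h0 | h0 | h0
  · by_cases hz0 : y = 0
    · exact Or.inl (by simpa [hz0] using h0)
    · exact Or.inr (Or.inl (hz0))
  · exact Or.inr (Or.inl (h0))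
  · exact Or.inr (Or.inr (h0))


lemma rep21 (a b c d e f t : ℤ)
    (h : Rep (a + t^2*b + 2*t*d) (b) (c) (d + t*b) (e + t*f) (f)) :
    Rep a b c d e f := by
  obtain ⟨x1, y1, z1, x2, y2, z2, x3, y3, z3, h1, h2, h3, h4, h5, h6⟩ := h
  exact ⟨x1 - t*x2, y1 - t*y2, z1 - t*z2, x2, y2, z2, x3, y3, z3, by linear_combination h1 - 2*t*h4 + t^2*h2, by linear_combination h2, by linear_combination h3, by linear_combination h4 - t*h2, by linear_combination h5 - t*h6, by linear_combination h6⟩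


lemma pd21 (a b c d e f t : ℤ) (h : PD a b c d e f) :
    PD (a + t^2*b + 2*t*d) (b) (c) (d + t*b) (e + t*f) (f) := by
  intro x y z hxyz
  have key : (a + t^2*b + 2*t*d)*x^2 + (b)*y^2 + (c)*z^2 + 2*(d + t*b)*x*y + 2*(e + t*f)*x*z + 2*(f)*y*z = a*(x)^2 + b*(y + t*x)^2 + c*(z)^2 + 2*d*(x)*(y + t*x) + 2*e*(x)*(z) + 2*f*(y + t*x)*(z) := by ring
  rw [key]
  refine h (x) (y + t*x) (z) ?_
  rcases hxyz with h0 | h0 | h0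
  · exact Or.inl (h0)
  · by_cases hz0 : x = 0
    · exact Or.inr (Or.inl (by simpa [hz0] using h0))
    · exact Or.inl (hz0)
  · exact Or.inr (Or.inr (h0))


lemma rep13 (a b c d e f t : ℤ)
    (h : Rep a (b) (c + t^2*a + 2*t*e) (d) (e + t*a) (f + t*d)) :
    Rep a b c d e f := by
  obtain ⟨x1, y1, z1, x2, y2, z2, x3, y3, z3, h1, h2, h3, h4, h5, h6⟩ := h
  exact ⟨x1, y1, z1, x2, y2, z2, x3 - t*x1, y3 - t*y1, z3 - t*z1, by linear_combination h1, by linear_combination h2, by linear_combination h3 - 2*t*h5 + t^2*h1, by linear_combination h4, by linear_combination h5 - t*h1, by linear_combination h6 - t*h4⟩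


lemma pd13 (a b c d e f t : ℤ) (h : PD a b c d e f) :
    PD (a) (b) (c + t^2*a + 2*t*e) (d) (e + t*a) (f + t*d) := by
  intro x y z hxyz
  have key : (a)*x^2 + (b)*y^2 + (c + t^2*a + 2*t*e)*z^2 + 2*(d)*x*y + 2*(e + t*a)*x*z + 2*(f + t*d)*y*z = a*(x + t*z)^2 + b*(y)^2 + c*(z)^2 + 2*d*(x + t*z)*(y) + 2*e*(x + t*z)*(z) + 2*f*(y)*(z) := by ring
  rw [key]
  refine h (x + t*z) (y) (z) ?_
  rcases hxyz with h0 | h0 | h0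
  · by_cases hz0 : z = 0
    · exact Or.inl (by simpa [hz0] using h0)
    · exact Or.inr (Or.inr (hz0))
  · exact Or.inr (Or.inl (h0))
  · exact Or.inr (Or.inr (h0))


lemma rep31 (a b c d e f t : ℤ)
    (h : Rep (a + t^2*c + 2*t*e) (b) (c) (d + t*f) (e + t*c) (f)) :
    Rep a b c d e f := by
  obtain ⟨x1, y1, z1, x2, y2, z2, x3, y3, z3, h1, h2, h3, h4, h5, h6⟩ := h
  exact ⟨x1 - t*x3, y1 - t*y3, z1 - t*z3, x2, y2, z2, x3, y3, z3, by linear_combination h1 - 2*t*h5 + t^2*h3, by linear_combination h2, by linear_combination h3, by linear_combination h4 - t*h6, by linear_combination h5 - t*h3, by linear_combination h6⟩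


lemma pd31 (a b c d e f t : ℤ) (h : PD a b c d e f) :
    PD (a + t^2*c + 2*t*e) (b) (c) (d + t*f) (e + t*c) (f) := by
  intro x y z hxyz
  have key : (a + t^2*c + 2*t*e)*x^2 + (b)*y^2 + (c)*z^2 + 2*(d + t*f)*x*y + 2*(e + t*c)*x*z + 2*(f)*y*z = a*(x)^2 + b*(y)^2 + c*(z + t*x)^2 + 2*d*(x)*(y) + 2*e*(x)*(z + t*x) + 2*f*(y)*(z + t*x) := by ring
  rw [key]
  refine h (x) (y) (z + t*x) ?_
  rcases hxyz with h0 | h0 | h0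
  · exact Or.inl (h0)
  · exact Or.inr (Or.inl (h0))
  · by_cases hz0 : x = 0
    · exact Or.inr (Or.inr (by simpa [hz0] using h0))
    · exact Or.inl (hz0)


lemma rep23 (a b c d e f t : ℤ)
    (h : Rep a (b) (c + t^2*b + 2*t*f) (d) (e + t*d) (f + t*b)) :
    Rep a b c d e f := by
  obtain ⟨x1, y1, z1, x2, y2, z2, x3, y3, z3, h1, h2, h3, h4, h5, h6⟩ := h
  exact ⟨x1, y1, z1, x2, y2, z2, x3 - t*x2, y3 - t*y2, z3 - t*z2, by linear_combination h1, by linear_combination h2, by linear_combination h3 - 2*t*h6 + t^2*h2, by linear_combination h4, by linear_combination h5 - t*h4, by linear_combination h6 - t*h2⟩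


lemma pd23 (a b c d e f t : ℤ) (h : PD a b c d e f) :
    PD (a) (b) (c + t^2*b + 2*t*f) (d) (e + t*d) (f + t*b) := by
  intro x y z hxyz
  have key : (a)*x^2 + (b)*y^2 + (c + t^2*b + 2*t*f)*z^2 + 2*(d)*x*y + 2*(e + t*d)*x*z + 2*(f + t*b)*y*z = a*(x)^2 + b*(y + t*z)^2 + c*(z)^2 + 2*d*(x)*(y + t*z) + 2*e*(x)*(z) + 2*f*(y + t*z)*(z) := by ring
  rw [key]
  refine h (x) (y + t*z) (z) ?_
  rcases hxyz with h0 | h0 | h0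
  · exact Or.inl (h0)
  · by_cases hz0 : z = 0
    · exact Or.inr (Or.inl (by simpa [hz0] using h0))
    · exact Or.inr (Or.inr (hz0))
  · exact Or.inr (Or.inr (h0))


lemma rep32 (a b c d e f t : ℤ)
    (h : Rep a (b + t^2*c + 2*t*f) (c) (d + t*e) (e) (f + t*c)) :
    Rep a b c d e f := by
  obtain ⟨x1, y1, z1, x2, y2, z2, x3, y3, z3, h1, h2, h3, h4, h5, h6⟩ := h
  exact ⟨x1, y1, z1, x2 - t*x3, y2 - t*y3, z2 - t*z3, x3, y3, z3, by linear_combination h1, by linear_combination h2 - 2*t*h6 + t^2*h3, by linear_combination h3, by linear_combination h4 - t*h5, by linear_combination h5, by linear_combination h6 - t*h3⟩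


lemma pd32 (a b c d e f t : ℤ) (h : PD a b c d e f) :
    PD (a) (b + t^2*c + 2*t*f) (c) (d + t*e) (e) (f + t*c) := by
  intro x y z hxyz
  have key : (a)*x^2 + (b + t^2*c + 2*t*f)*y^2 + (c)*z^2 + 2*(d + t*e)*x*y + 2*(e)*x*z + 2*(f + t*c)*y*z = a*(x)^2 + b*(y)^2 + c*(z + t*y)^2 + 2*d*(x)*(y) + 2*e*(x)*(z + t*y) + 2*f*(y)*(z + t*y) := by ring
  rw [key]
  refine h (x) (y) (z + t*y) ?_
  rcases hxyz with h0 | h0 | h0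
  · exact Or.inl (h0)
  · exact Or.inr (Or.inl (h0))
  · by_cases hz0 : y = 0
    · exact Or.inr (Or.inr (by simpa [hz0] using h0))
    · exact Or.inr (Or.inl (hz0))


lemma rep3 (a b c d e f s t : ℤ)
    (h : Rep a (b) (c + s^2*a + t^2*b + 2*s*e + 2*t*f + 2*s*t*d) (d) (e + s*a + t*d) (f + s*d + t*b)) :
    Rep a b c d e f := by
  obtain ⟨x1, y1, z1, x2, y2, z2, x3, y3, z3, h1, h2, h3, h4, h5, h6⟩ := h
  exact ⟨x1, y1, z1, x2, y2, z2, x3 - s*x1 - t*x2, y3 - s*y1 - t*y2, z3 - s*z1 - t*z2, by linear_combination h1, by linear_combination h2, by linear_combination h3 + s^2*h1 + t^2*h2 - 2*s*h5 - 2*t*h6 + 2*s*t*h4, by linear_combination h4, by linear_combination h5 - s*h1 - t*h4, by linear_combination h6 - s*h4 - t*h2⟩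


lemma pd3 (a b c d e f s t : ℤ) (h : PD a b c d e f) :
    PD (a) (b) (c + s^2*a + t^2*b + 2*s*e + 2*t*f + 2*s*t*d) (d) (e + s*a + t*d) (f + s*d + t*b) := by
  intro x y z hxyz
  have key : (a)*x^2 + (b)*y^2 + (c + s^2*a + t^2*b + 2*s*e + 2*t*f + 2*s*t*d)*z^2 + 2*(d)*x*y + 2*(e + s*a + t*d)*x*z + 2*(f + s*d + t*b)*y*z = a*(x + s*z)^2 + b*(y + t*z)^2 + c*(z)^2 + 2*d*(x + s*z)*(y + t*z) + 2*e*(x + s*z)*(z) + 2*f*(y + t*z)*(z) := by ring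
  rw [key]
  refine h (x + s*z) (y + t*z) (z) ?_
  rcases hxyz with h0 | h0 | h0
  · by_cases hz0 : z = 0
    · exact Or.inl (by simpa [hz0] using h0)
    · exact Or.inr (Or.inr (hz0))
  · by_cases hz0 : z = 0
    · exact Or.inr (Or.inl (by simpa [hz0] using h0))
    · exact Or.inr (Or.inr (hz0))
  · exact Or.inr (Or.inr (h0))


lemma rep2 (a b c d e f s t : ℤ)
    (h : Rep a (b + s^2*a + t^2*c + 2*s*d + 2*t*f + 2*s*t*e) (c) (d + s*a + t*e) (e) (f + s*e + t*c)) :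
    Rep a b c d e f := by
  obtain ⟨x1, y1, z1, x2, y2, z2, x3, y3, z3, h1, h2, h3, h4, h5, h6⟩ := h
  exact ⟨x1, y1, z1, x2 - s*x1 - t*x3, y2 - s*y1 - t*y3, z2 - s*z1 - t*z3, x3, y3, z3, by linear_combination h1, by linear_combination h2 + s^2*h1 + t^2*h3 - 2*s*h4 - 2*t*h6 + 2*s*t*h5, by linear_combination h3, by linear_combination h4 - s*h1 - t*h5, by linear_combination h5, by linear_combination h6 - s*h5 - t*h3⟩


lemma pd2 (a b c d e f s t : ℤ) (h : PD a b c d e f) :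
    PD (a) (b + s^2*a + t^2*c + 2*s*d + 2*t*f + 2*s*t*e) (c) (d + s*a + t*e) (e) (f + s*e + t*c) := by
  intro x y z hxyz
  have key : (a)*x^2 + (b + s^2*a + t^2*c + 2*s*d + 2*t*f + 2*s*t*e)*y^2 + (c)*z^2 + 2*(d + s*a + t*e)*x*y + 2*(e)*x*z + 2*(f + s*e + t*c)*y*z = a*(x + s*y)^2 + b*(y)^2 + c*(z + t*y)^2 + 2*d*(x + s*y)*(y) + 2*e*(x + s*y)*(z + t*y) + 2*f*(y)*(z + t*y) := by ring
  rw [key]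
  refine h (x + s*y) (y) (z + t*y) ?_
  rcases hxyz with h0 | h0 | h0
  · by_cases hz0 : y = 0
    · exact Or.inl (by simpa [hz0] using h0)
    · exact Or.inr (Or.inl (hz0))
  · exact Or.inr (Or.inl (h0))
  · by_cases hz0 : y = 0
    · exact Or.inr (Or.inr (by simpa [hz0] using h0))
    · exact Or.inr (Or.inl (hz0))


lemma rep1 (a b c d e f s t : ℤ)
    (h : Rep (a + s^2*b + t^2*c + 2*s*d + 2*t*e + 2*s*t*f) (b) (c) (d + s*b + t*f) (e + s*f + t*c) (f)) :
    Rep a b c d e f := by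
  obtain ⟨x1, y1, z1, x2, y2, z2, x3, y3, z3, h1, h2, h3, h4, h5, h6⟩ := h
  exact ⟨x1 - s*x2 - t*x3, y1 - s*y2 - t*y3, z1 - s*z2 - t*z3, x2, y2, z2, x3, y3, z3, by linear_combination h1 + s^2*h2 + t^2*h3 - 2*s*h4 - 2*t*h5 + 2*s*t*h6, by linear_combination h2, by linear_combination h3, by linear_combination h4 - s*h2 - t*h6, by linear_combination h5 - s*h6 - t*h3, by linear_combination h6⟩


lemma pd1 (a b c d e f s t : ℤ) (h : PD a b c d e f) :
    PD (a + s^2*b + t^2*c + 2*s*d + 2*t*e + 2*s*t*f) (b) (c) (d + s*b + t*f) (e + s*f + t*c) (f) := by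
  intro x y z hxyz
  have key : (a + s^2*b + t^2*c + 2*s*d + 2*t*e + 2*s*t*f)*x^2 + (b)*y^2 + (c)*z^2 + 2*(d + s*b + t*f)*x*y + 2*(e + s*f + t*c)*x*z + 2*(f)*y*z = a*(x)^2 + b*(y + s*x)^2 + c*(z + t*x)^2 + 2*d*(x)*(y + s*x) + 2*e*(x)*(z + t*x) + 2*f*(y + s*x)*(z + t*x) := by ring
  rw [key]
  refine h (x) (y + s*x) (z + t*x) ?_
  rcases hxyz with h0 | h0 | h0
  · exact Or.inl (h0)
  · by_cases hz0 : x = 0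
    · exact Or.inr (Or.inl (by simpa [hz0] using h0))
    · exact Or.inl (hz0)
  · by_cases hz0 : x = 0
    · exact Or.inr (Or.inr (by simpa [hz0] using h0))
    · exact Or.inl (hz0)


theorem reduce : ∀ (N : ℕ) (a b c d e f : ℤ), a + b + c ≤ (N : ℤ) →
    PD a b c d e f →
    a*b*c + 2*d*e*f - a*f^2 - b*e^2 - c*d^2 = 1 →
    Rep a b c d e f := by
  intro N
  induction N with
  | zero =>
    intro a b c d e f hN hPD _
    have ha : 0 < a := by have := hPD 1 0 0 (Or.inl one_ne_zero); linarith
    have hb : 0 < b := by have := hPD 0 1 0 (Or.inr (Or.inl one_ne_zero)); linarith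
    have hc : 0 < c := by have := hPD 0 0 1 (Or.inr (Or.inr one_ne_zero)); linarith
    simp only [Nat.cast_zero] at hN
    linarith
  | succ N ih =>
    intro a b c d e f hN hPD hdet
    push_cast at hN
    have ha : 0 < a := by have := hPD 1 0 0 (Or.inl one_ne_zero); linarith
    have hb : 0 < b := by have := hPD 0 1 0 (Or.inr (Or.inl one_ne_zero)); linarith
    have hc : 0 < c := by have := hPD 0 0 1 (Or.inr (Or.inr one_ne_zero)); linarith
    rcases lt_or_ge (a + 2*d) 0 with hlt | hd1
    · exact rep12 a b c d e f 1 (ih _ _ _ _ _ _ (by linarith) (pd12 a b c d e f 1 hPD) (by linear_combination hdet))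
    rcases lt_or_ge (a - 2*d) 0 with hlt | hd2
    · exact rep12 a b c d e f (-1) (ih _ _ _ _ _ _ (by linarith) (pd12 a b c d e f (-1) hPD) (by linear_combination hdet))
    rcases lt_or_ge (b + 2*d) 0 with hlt | hd3
    · exact rep21 a b c d e f 1 (ih _ _ _ _ _ _ (by linarith) (pd21 a b c d e f 1 hPD) (by linear_combination hdet))
    rcases lt_or_ge (b - 2*d) 0 with hlt | hd4
    · exact rep21 a b c d e f (-1) (ih _ _ _ _ _ _ (by linarith) (pd21 a b c d e f (-1) hPD) (by linear_combination hdet))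
    rcases lt_or_ge (a + 2*e) 0 with hlt | he1
    · exact rep13 a b c d e f 1 (ih _ _ _ _ _ _ (by linarith) (pd13 a b c d e f 1 hPD) (by linear_combination hdet))
    rcases lt_or_ge (a - 2*e) 0 with hlt | he2
    · exact rep13 a b c d e f (-1) (ih _ _ _ _ _ _ (by linarith) (pd13 a b c d e f (-1) hPD) (by linear_combination hdet))
    rcases lt_or_ge (c + 2*e) 0 with hlt | he3
    · exact rep31 a b c d e f 1 (ih _ _ _ _ _ _ (by linarith) (pd31 a b c d e f 1 hPD) (by linear_combination hdet))
    rcases lt_or_ge (c - 2*e) 0 with hlt | he4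
    · exact rep31 a b c d e f (-1) (ih _ _ _ _ _ _ (by linarith) (pd31 a b c d e f (-1) hPD) (by linear_combination hdet))
    rcases lt_or_ge (b + 2*f) 0 with hlt | hf1
    · exact rep23 a b c d e f 1 (ih _ _ _ _ _ _ (by linarith) (pd23 a b c d e f 1 hPD) (by linear_combination hdet))
    rcases lt_or_ge (b - 2*f) 0 with hlt | hf2
    · exact rep23 a b c d e f (-1) (ih _ _ _ _ _ _ (by linarith) (pd23 a b c d e f (-1) hPD) (by linear_combination hdet))
    rcases lt_or_ge (c + 2*f) 0 with hlt | hf3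
    · exact rep32 a b c d e f 1 (ih _ _ _ _ _ _ (by linarith) (pd32 a b c d e f 1 hPD) (by linear_combination hdet))
    rcases lt_or_ge (c - 2*f) 0 with hlt | hf4
    · exact rep32 a b c d e f (-1) (ih _ _ _ _ _ _ (by linarith) (pd32 a b c d e f (-1) hPD) (by linear_combination hdet))
    rcases lt_or_ge (a + b + 2*e + 2*f + 2*d) 0 with hlt | t1
    · exact rep3 a b c d e f 1 1 (ih _ _ _ _ _ _ (by linarith) (pd3 a b c d e f 1 1 hPD) (by linear_combination hdet))
    rcases lt_or_ge (a + b + 2*e - 2*f - 2*d) 0 with hlt | t2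
    · exact rep3 a b c d e f 1 (-1) (ih _ _ _ _ _ _ (by linarith) (pd3 a b c d e f 1 (-1) hPD) (by linear_combination hdet))
    rcases lt_or_ge (a + b - 2*e + 2*f - 2*d) 0 with hlt | t3
    · exact rep3 a b c d e f (-1) 1 (ih _ _ _ _ _ _ (by linarith) (pd3 a b c d e f (-1) 1 hPD) (by linear_combination hdet))
    rcases lt_or_ge (a + b - 2*e - 2*f + 2*d) 0 with hlt | t4
    · exact rep3 a b c d e f (-1) (-1) (ih _ _ _ _ _ _ (by linarith) (pd3 a b c d e f (-1) (-1) hPD) (by linear_combination hdet))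
    rcases lt_or_ge (a + c + 2*d + 2*f + 2*e) 0 with hlt | u1
    · exact rep2 a b c d e f 1 1 (ih _ _ _ _ _ _ (by linarith) (pd2 a b c d e f 1 1 hPD) (by linear_combination hdet))
    rcases lt_or_ge (a + c + 2*d - 2*f - 2*e) 0 with hlt | u2
    · exact rep2 a b c d e f 1 (-1) (ih _ _ _ _ _ _ (by linarith) (pd2 a b c d e f 1 (-1) hPD) (by linear_combination hdet))
    rcases lt_or_ge (a + c - 2*d + 2*f - 2*e) 0 with hlt | u3
    · exact rep2 a b c d e f (-1) 1 (ih _ _ _ _ _ _ (by linarith) (pd2 a b c d e f (-1) 1 hPD) (by linear_combination hdet))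
    rcases lt_or_ge (a + c - 2*d - 2*f + 2*e) 0 with hlt | u4
    · exact rep2 a b c d e f (-1) (-1) (ih _ _ _ _ _ _ (by linarith) (pd2 a b c d e f (-1) (-1) hPD) (by linear_combination hdet))
    rcases lt_or_ge (b + c + 2*d + 2*e + 2*f) 0 with hlt | v1
    · exact rep1 a b c d e f 1 1 (ih _ _ _ _ _ _ (by linarith) (pd1 a b c d e f 1 1 hPD) (by linear_combination hdet))
    rcases lt_or_ge (b + c + 2*d - 2*e - 2*f) 0 with hlt | v2
    · exact rep1 a b c d e f 1 (-1) (ih _ _ _ _ _ _ (by linarith) (pd1 a b c d e f 1 (-1) hPD) (by linear_combination hdet))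
    rcases lt_or_ge (b + c - 2*d + 2*e - 2*f) 0 with hlt | v3
    · exact rep1 a b c d e f (-1) 1 (ih _ _ _ _ _ _ (by linarith) (pd1 a b c d e f (-1) 1 hPD) (by linear_combination hdet))
    rcases lt_or_ge (b + c - 2*d - 2*e + 2*f) 0 with hlt | v4
    · exact rep1 a b c d e f (-1) (-1) (ih _ _ _ _ _ _ (by linarith) (pd1 a b c d e f (-1) (-1) hPD) (by linear_combination hdet))
    -- terminal: reduced form
    have habc : a*b*c ≤ 2 := by
      have k := keyIneq a b c d e f hd1 hd2 hd3 hd4 he1 he2 he3 he4 hf1 hf2 hf3 hf4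
        t1 t2 t3 t4 u1 u2 u3 u4 v1 v2 v3 v4
      linarith [k, hdet]
    have ha1 : 1 ≤ a := by omega
    have hb1 : 1 ≤ b := by omega
    have hc1 : 1 ≤ c := by omega
    have hbc : 1 ≤ b*c := by
      have h := mul_le_mul hb1 hc1 (by norm_num : (0:ℤ) ≤ 1) (by omega : (0:ℤ) ≤ b)
      linarith
    have hac : 1 ≤ a*c := by
      have h := mul_le_mul ha1 hc1 (by norm_num : (0:ℤ) ≤ 1) (by omega : (0:ℤ) ≤ a)
      linarith
    have hab : 1 ≤ a*b := by
      have h := mul_le_mul ha1 hb1 (by norm_num : (0:ℤ) ≤ 1) (by omega : (0:ℤ) ≤ a)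
      linarith
    have ha2 : a ≤ 2 := by
      have h := mul_le_mul_of_nonneg_left hbc (by omega : (0:ℤ) ≤ a)
      linarith
    have hb2 : b ≤ 2 := by
      have h := mul_le_mul_of_nonneg_left hac (by omega : (0:ℤ) ≤ b)
      nlinarith [h]
    have hc2 : c ≤ 2 := by
      have h := mul_le_mul_of_nonneg_left hab (by omega : (0:ℤ) ≤ c)
      nlinarith [h]
    interval_cases a <;> interval_cases b <;> interval_cases c <;>
      first
      | (exfalso; omega)
      | (have hd0 : d = 0 := by omega
         have he0 : e = 0 := by omega
         have hf0 : f = 0 := by omega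
         subst hd0; subst he0; subst hf0
         first
         | (refine ⟨1, 0, 0, 0, 1, 0, 0, 0, 1, ?_, ?_, ?_, ?_, ?_, ?_⟩ <;> decide)
         | (exfalso; norm_num at hdet))

lemma pd_of_minors (a b c d e f : ℤ) (ha : 0 < a) (h2 : 0 < a*b - d^2)
    (hdet : a*b*c + 2*d*e*f - a*f^2 - b*e^2 - c*d^2 = 1) : PD a b c d e f := by
  intro x y z hxyz
  by_contra hQ
  push_neg at hQ
  have key : (a*b - d^2) * (a * (a*x^2 + b*y^2 + c*z^2 + 2*d*x*y + 2*e*x*z + 2*f*y*z))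
      = (a*b - d^2)*(a*x + d*y + e*z)^2 + ((a*b - d^2)*y + (a*f - d*e)*z)^2 + a*z^2 := by
    linear_combination a*z^2*hdet
  have hprod : (a*b - d^2) * (a * (a*x^2 + b*y^2 + c*z^2 + 2*d*x*y + 2*e*x*z + 2*f*y*z)) ≤ 0 := by
    apply mul_nonpos_of_nonneg_of_nonpos (le_of_lt h2)
    exact mul_nonpos_of_nonneg_of_nonpos (le_of_lt ha) hQ
  have hz2 : z^2 ≤ 0 := by
    nlinarith [sq_nonneg (a*x + d*y + e*z), sq_nonneg ((a*b - d^2)*y + (a*f - d*e)*z)]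
  have hz : z = 0 := by
    have := sq_nonneg z
    have hzz : z^2 = 0 := le_antisymm hz2 this
    exact sq_eq_zero_iff.mp hzz
  subst hz
  have hy2 : ((a*b - d^2)*y)^2 ≤ 0 := by
    nlinarith [sq_nonneg (a*x + d*y + e*0)]
  have hy : y = 0 := by
    have hyy : (a*b - d^2)*y = 0 := by
      have := sq_nonneg ((a*b - d^2)*y)
      have h0 : ((a*b - d^2)*y)^2 = 0 := le_antisymm hy2 this
      exact sq_eq_zero_iff.mp h0
    rcases mul_eq_zero.mp hyy with h | h
    · exfalso; nlinarith
    · exact h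
  subst hy
  have hx2 : (a*x)^2 ≤ 0 := by nlinarith
  have hx : x = 0 := by
    have hxx : a*x = 0 := by
      have := sq_nonneg (a*x)
      have h0 : (a*x)^2 = 0 := le_antisymm hx2 this
      exact sq_eq_zero_iff.mp h0
    rcases mul_eq_zero.mp hxx with h | h
    · exfalso; exact absurd h (ne_of_gt ha)
    · exact h
  subst hx
  rcases hxyz with h | h | h <;> exact h rfl

end ThreeSq

theorem stmt13 (n : ℕ) : ∃ x y z : ℤ, 24 * (n : ℤ) + 3 = x ^ 2 + y ^ 2 + z ^ 2 := by
  -- Setup: find prime p ≡ 12n+1 (mod 96n+12) via Dirichlet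
  set M : ℕ := 96*n + 12 with hM
  haveI : NeZero M := ⟨by omega⟩
  have hunit : IsUnit ((12*n+1 : ℕ) : ZMod M) := by
    apply IsUnit.of_mul_eq_one ((24*n+1 : ℕ) : ZMod M)
    have h1 : (12*n+1) * (24*n+1) = 3*n*M + 1 := by rw [hM]; ring
    calc ((12*n+1 : ℕ) : ZMod M) * ((24*n+1 : ℕ) : ZMod M)
        = (((12*n+1) * (24*n+1) : ℕ) : ZMod M) := by push_cast; ring
      _ = ((3*n*M + 1 : ℕ) : ZMod M) := by rw [h1]
      _ = 1 := by
        rw [Nat.cast_add, Nat.cast_mul, ZMod.natCast_self, mul_zero, zero_add, Nat.cast_one]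
  obtain ⟨p, hpgt, hpp, hpmod⟩ := Nat.forall_exists_prime_gt_and_eq_mod hunit M
  haveI : Fact (Nat.Prime p) := ⟨hpp⟩
  have hmodeq : p ≡ 12*n+1 [MOD M] := (ZMod.natCast_eq_natCast_iff _ _ _).mp hpmod
  have hpM : p % M = 12*n+1 := by
    have h := hmodeq
    unfold Nat.ModEq at h
    rw [h]
    exact Nat.mod_eq_of_lt (by omega)
  have hdm := Nat.div_add_mod p M
  set k := p / M with hk
  rw [hpM] at hdm
  have hpk : p = M*k + (12*n+1) := hdm.symm
  have hk1 : 1 ≤ k := by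
    rcases Nat.eq_zero_or_pos k with h0 | h
    · exfalso; rw [h0, Nat.mul_zero] at hpk; omega
    · exact h
  set m : ℕ := 8*k + 1 with hm
  set nn : ℕ := 24*n + 3 with hnn
  have hnm : nn * m = 2*p + 1 := by rw [hnn, hm, hpk, hM]; ring
  clear_value M k m nn
  have hp2 : p ≠ 2 := by omega
  have hpodd : Odd p := hpp.odd_of_ne_two hp2
  have hpodd2 : p % 2 = 1 := Nat.odd_iff.mp hpodd
  have hp4 : p % 4 = 1 := by
    obtain ⟨j, hj⟩ : 4 ∣ M*k := ⟨(24*n+3)*k, by rw [hM]; ring⟩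
    omega
  have hm8 : m % 8 = 1 := by omega
  have hmodd : Odd m := Nat.odd_iff.mpr (by omega)
  have hmp : m < p := by
    have h12 : 12*k ≤ M*k := Nat.mul_le_mul_right k (by omega)
    omega
  -- Jacobi symbol computation: -m is a QR mod p
  have hnmZ : (nn : ℤ) * (m : ℤ) = 2*(p:ℤ) + 1 := by exact_mod_cast hnm
  have hJ2 : jacobiSym 2 m = 1 := by
    rw [jacobiSym.at_two hmodd, ZMod.χ₈_nat_eq_if_mod_eight]
    simp [show m % 2 = 1 by omega, hm8]
  have hJneg1 : jacobiSym (-1) m = 1 := by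
    rw [jacobiSym.at_neg_one hmodd, ZMod.χ₄_nat_eq_if_mod_four]
    simp [show m % 2 = 1 by omega, show m % 4 = 1 by omega]
  have hmodQ : (2*(p:ℤ)) % (m:ℤ) = (-1 : ℤ) % (m:ℤ) := by
    have hdd : ((m:ℤ)) ∣ (-1 - 2*(p:ℤ)) := ⟨-(nn:ℤ), by linear_combination hnmZ⟩
    exact Int.modEq_iff_dvd.mpr hdd
  have hJp : jacobiSym (p:ℤ) m = 1 := by
    have h1 : jacobiSym (2*(p:ℤ)) m = jacobiSym (-1) m := jacobiSym.mod_left' hmodQ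
    rw [jacobiSym.mul_left, hJ2, hJneg1, one_mul] at h1
    exact h1
  have hrec : jacobiSym (m:ℤ) p = jacobiSym (p:ℤ) m :=
    jacobiSym.quadratic_reciprocity_one_mod_four (by omega) hpodd
  have hLm : legendreSym p (m:ℤ) = 1 := by
    rw [jacobiSym.legendreSym.to_jacobiSym, hrec, hJp]
  have hLneg1 : legendreSym p (-1) = 1 := by
    rw [legendreSym.at_neg_one hp2, ZMod.χ₄_nat_eq_if_mod_four]
    simp [hpodd2, hp4]
  have hL : legendreSym p (-(m:ℤ)) = 1 := by
    rw [show (-(m:ℤ)) = (-1) * (m:ℤ) by ring, legendreSym.mul, hLneg1, hLm, one_mul]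
  have hpm : ¬ (p ∣ m) := by
    intro hdvd
    have := Nat.le_of_dvd (by omega) hdvd
    omega
  have hne : ((-(m:ℤ) : ℤ) : ZMod p) ≠ 0 := by
    rw [Int.cast_neg, neg_ne_zero, Int.cast_natCast]
    intro h
    exact hpm ((ZMod.natCast_eq_zero_iff m p).mp h)
  have hsq : IsSquare ((-(m:ℤ) : ℤ) : ZMod p) := (legendreSym.eq_one_iff p hne).mp hL
  obtain ⟨y, hy⟩ := hsq
  have hs1 : (((y.val : ℤ)^2 + (m:ℤ) : ℤ) : ZMod p) = 0 := by
    push_cast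
    rw [ZMod.natCast_val, ZMod.cast_id]
    push_cast at hy
    linear_combination -hy
  have hdvdp : (p:ℤ) ∣ (y.val : ℤ)^2 + (m:ℤ) := (ZMod.intCast_zmod_eq_zero_iff_dvd _ p).mp hs1
  obtain ⟨s, hsodd, hsdvd⟩ : ∃ s : ℤ, Odd s ∧ (p:ℤ) ∣ s^2 + (m:ℤ) := by
    rcases Int.even_or_odd (y.val : ℤ) with hev | hod
    · refine ⟨(y.val : ℤ) + p, ?_, ?_⟩
      · exact hev.add_odd (by exact_mod_cast hpodd)
      · obtain ⟨C0, hC0⟩ := hdvdp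
        exact ⟨C0 + 2*(y.val : ℤ) + p, by linear_combination hC0⟩
    · exact ⟨(y.val : ℤ), hod, hdvdp⟩
  have h2dvd : (2:ℤ) ∣ s^2 + (m:ℤ) := by
    obtain ⟨j, hj⟩ := hsodd
    obtain ⟨i, hi⟩ : ∃ i : ℕ, m = 2*i+1 := ⟨m/2, by omega⟩
    refine ⟨2*j^2 + 2*j + (i:ℤ) + 1, ?_⟩
    rw [hj]
    have : (m:ℤ) = 2*(i:ℤ) + 1 := by exact_mod_cast hi
    rw [this]; ring
  have hcop : IsCoprime (2:ℤ) ((p:ℤ)) := by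
    rw [Int.isCoprime_iff_gcd_eq_one]
    have : Int.gcd 2 (p:ℤ) = Nat.gcd 2 p := by
      rw [show (2:ℤ) = ((2:ℕ):ℤ) by norm_num, Int.gcd_natCast_natCast]
    rw [this]
    exact (Nat.prime_two.coprime_iff_not_dvd).mpr (by omega)
  have h2p : (2*(p:ℤ)) ∣ s^2 + (m:ℤ) := hcop.mul_dvd h2dvd hsdvd
  obtain ⟨C, hC⟩ := h2p
  have hp0 : 0 < (p:ℤ) := by exact_mod_cast hpp.pos
  have hm0 : 0 < (m:ℤ) := by exact_mod_cast (by omega : 0 < m)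
  have hdet : (2*(p:ℤ))*C*(nn:ℤ) + 2*s*0*1 - (2*(p:ℤ))*1^2 - C*0^2 - (nn:ℤ)*s^2 = 1 := by
    linear_combination -(nn:ℤ)*hC + hnmZ
  have hrep : ThreeSq.Rep (2*(p:ℤ)) C (nn:ℤ) s 0 1 := by
    apply ThreeSq.reduce (2*(p:ℤ) + C + (nn:ℤ)).toNat
    · exact Int.self_le_toNat _
    · apply ThreeSq.pd_of_minors
      · linarith
      · have : (2*(p:ℤ))*C - s^2 = (m:ℤ) := by linear_combination -hC
        linarith
      · exact hdet
    · exact hdet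
  obtain ⟨x1, y1, z1, x2, y2, z2, x3, y3, z3, h1, h2, h3, h4, h5, h6⟩ := hrep
  refine ⟨x3, y3, z3, ?_⟩
  have : (nn:ℤ) = 24*(n:ℤ) + 3 := by rw [hnn]; push_cast; ring
  rw [← this, h3]
end
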